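/- arXiv:1504.01796 — 5 statements merged into one kernel-verified Lean document; each statement's English description precedes it below -/
import Mathlib

section
/- Let $(S,\Sigma)$ be a measurable space, $\{\mu^{(n)}\}$ finite measures converging in total variation to a measure $\mu$, $f \in L^1(S;\mu)$, and $f^{(n)} \in L^1(S;\mu^{(n)})$ for each $n$. If $\liminf_{n\to\infty} \inf_{A \in \Sigma} (\int_A f^{(n)}\,d\mu^{(n)} - \int_A f\,d\mu) \ge 0$, then for each $\varepsilon > 0$, $\mu(\{s : f^{(n)}(s) \le f(s) - \varepsilon\}) \to 0$ as $n \to \infty$. -/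
open MeasureTheory Filter Topology
open scoped ENNReal NNReal

private lemma uf_alg {x y d0 : ℝ} (hx : x ≠ 0) (hy : y ≠ 0) :
    x * (d0 / (x * y) * y) = d0 := by
  field_simp

private lemma uf_piece_real {a b t c Mc ε : ℝ} (hε : 0 < ε) (ht : 0 ≤ t)
    (ha : 0 ≤ a) (hb : 0 ≤ b) (hc : |c| ≤ Mc)
    (hab : a ≤ b + t) (hba : b ≤ a + t)
    (hkey : -t ≤ b * (c - ε / 2) - a * c) :
    a ≤ t * ((2 / ε) * (1 + Mc) + 1) := by
  have hc1 : -Mc ≤ c := neg_le_of_abs_le hc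
  have hc2 : c ≤ Mc := le_of_abs_le hc
  have h1 : c * (b - a) ≤ Mc * t := by
    nlinarith [mul_nonneg (by linarith : (0:ℝ) ≤ Mc - c) (by linarith : (0:ℝ) ≤ t + (b - a)),
      mul_nonneg (by linarith : (0:ℝ) ≤ Mc + c) (by linarith : (0:ℝ) ≤ t - (b - a))]
  have h2 : (ε / 2) * b ≤ t + Mc * t := by nlinarith
  have h4 := mul_le_mul_of_nonneg_left h2 (by positivity : (0:ℝ) ≤ 2 / ε)
  have h3 : (2 / ε) * ((ε / 2) * b) = b := by field_simp
  have h5 : b ≤ (2 / ε) * (t + Mc * t) := by rw [← h3]; exact h4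
  have h6 : t * ((2 / ε) * (1 + Mc) + 1) = (2 / ε) * (t + Mc * t) + t := by ring
  linarith

private lemma uf_piece_bound {S : Type*} [MeasurableSpace S] {ν μ : Measure S}
    [IsFiniteMeasure ν] [IsFiniteMeasure μ]
    {g Gn : S → ℝ} {B : Set S} (hB : MeasurableSet B)
    {ε c Mc t : ℝ} (hε : 0 < ε) (ht : 0 ≤ t) (hc : |c| ≤ Mc)
    (hgB : ∀ x ∈ B, c ≤ g x) (hGB : ∀ x ∈ B, Gn x ≤ c - ε / 2)
    (hg : IntegrableOn g B μ) (hGn : IntegrableOn Gn B ν)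
    (htv1 : μ B ≤ ν B + ENNReal.ofReal t) (htv2 : ν B ≤ μ B + ENNReal.ofReal t)
    (hFat : -t ≤ (∫ s in B, Gn s ∂ν) - ∫ s in B, g s ∂μ) :
    μ B ≤ ENNReal.ofReal (t * ((2 / ε) * (1 + Mc) + 1)) := by
  set a := (μ B).toReal with ha
  set b := (ν B).toReal with hbb
  have hμB : μ B ≠ ⊤ := (measure_lt_top μ B).ne
  have hνB : ν B ≠ ⊤ := (measure_lt_top ν B).ne
  have hab : a ≤ b + t := by
    have h := ENNReal.toReal_mono (by finiteness) htv1
    rwa [ENNReal.toReal_add hνB ENNReal.ofReal_ne_top, ENNReal.toReal_ofReal ht] at h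
  have hba : b ≤ a + t := by
    have h := ENNReal.toReal_mono (by finiteness) htv2
    rwa [ENNReal.toReal_add hμB ENNReal.ofReal_ne_top, ENNReal.toReal_ofReal ht] at h
  have hint1 : (∫ s in B, Gn s ∂ν) ≤ b * (c - ε / 2) := by
    calc (∫ s in B, Gn s ∂ν) ≤ ∫ _ in B, (c - ε / 2) ∂ν :=
          setIntegral_mono_on hGn (integrableOn_const (measure_lt_top ν B).ne) hB hGB
      _ = b * (c - ε / 2) := by rw [setIntegral_const, smul_eq_mul]; rfl
  have hint2 : a * c ≤ ∫ s in B, g s ∂μ := by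
    calc a * c = ∫ _ in B, c ∂μ := by rw [setIntegral_const, smul_eq_mul]; rfl
      _ ≤ ∫ s in B, g s ∂μ :=
          setIntegral_mono_on (integrableOn_const (measure_lt_top μ B).ne) hg hB hgB
  have hkey : -t ≤ b * (c - ε / 2) - a * c := by linarith
  have hfinal := uf_piece_real hε ht ENNReal.toReal_nonneg ENNReal.toReal_nonneg hc hab hba hkey
  calc μ B = ENNReal.ofReal a := (ENNReal.ofReal_toReal hμB).symm
    _ ≤ _ := ENNReal.ofReal_le_ofReal hfinal

set_option maxHeartbeats 1000000 in
/-- If the uniform Fatou inequality (1.1) holds for finite measures converging in total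
variation, then `μ {s | F n s ≤ f s - ε} → 0` for every `ε > 0`. -/
theorem uniform_fatou_stmt2 {S : Type*} [MeasurableSpace S]
    (μs : ℕ → Measure S) (μ : Measure S) [∀ n, IsFiniteMeasure (μs n)]
    (htv : Tendsto (fun n => ⨆ (A : Set S) (_ : MeasurableSet A),
      (μs n A - μ A) + (μ A - μs n A)) atTop (𝓝 0))
    (f : S → ℝ) (F : ℕ → S → ℝ)
    (hf : Integrable f μ) (hF : ∀ n, Integrable (F n) (μs n))
    (h : ∀ ε : ℝ, 0 < ε → ∀ᶠ n in atTop,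
      -ε ≤ ⨅ (A : Set S) (_ : MeasurableSet A),
        (∫ s in A, F n s ∂(μs n) - ∫ s in A, f s ∂μ)) :
    ∀ ε : ℝ, 0 < ε →
      Tendsto (fun n => μ {s | F n s ≤ f s - ε}) atTop (𝓝 0) := by
  intro ε hε
  obtain ⟨g, hg_sm, hg_int, hgf⟩ : ∃ g, StronglyMeasurable g ∧ Integrable g μ ∧ f =ᵐ[μ] g :=
    ⟨hf.1.mk f, hf.1.stronglyMeasurable_mk, hf.congr hf.1.ae_eq_mk, hf.1.ae_eq_mk⟩
  set G : ℕ → S → ℝ := fun n => (hF n).1.mk (F n) with hGdef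
  have hG_sm : ∀ n, StronglyMeasurable (G n) := fun n => (hF n).1.stronglyMeasurable_mk
  have hFG : ∀ n, F n =ᵐ[μs n] G n := fun n => (hF n).1.ae_eq_mk
  have hG_int : ∀ n, Integrable (G n) (μs n) := fun n => (hF n).congr (hFG n)
  -- reformulated total variation bound
  have hTV : ∀ t : ℝ, 0 < t → ∀ᶠ n in atTop, ∀ A : Set S, MeasurableSet A →
      μs n A ≤ μ A + ENNReal.ofReal t ∧ μ A ≤ μs n A + ENNReal.ofReal t := by
    intro t ht
    have h0 : (0 : ℝ≥0∞) < ENNReal.ofReal t := ENNReal.ofReal_pos.2 ht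
    filter_upwards [htv.eventually_lt_const h0] with n hn A hA
    have hle : (μs n A - μ A) + (μ A - μs n A) ≤ ENNReal.ofReal t := by
      refine le_trans ?_ hn.le
      exact le_iSup₂ (f := fun (A : Set S) (_ : MeasurableSet A) =>
        (μs n A - μ A) + (μ A - μs n A)) A hA
    have hx : μs n A - μ A ≤ (μs n A - μ A) + (μ A - μs n A) := self_le_add_right _ _
    have hy : μ A - μs n A ≤ (μs n A - μ A) + (μ A - μs n A) := self_le_add_left _ _
    exact ⟨tsub_le_iff_left.1 (hx.trans hle), tsub_le_iff_left.1 (hy.trans hle)⟩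
  have hμfin : IsFiniteMeasure μ := by
    obtain ⟨n, hn⟩ := (hTV 1 one_pos).exists
    exact ⟨lt_of_le_of_lt ((hn Set.univ MeasurableSet.univ).2) (by finiteness)⟩
  -- truncation level
  have htail : ∀ dd : ℝ≥0∞, 0 < dd → ∃ M : ℕ, 0 < M ∧ μ {s | (M : ℝ) ≤ |g s|} ≤ dd := by
    intro dd hdd
    have hmeas : ∀ j : ℕ, MeasurableSet {s | (j : ℝ) ≤ |g s|} :=
      fun j => measurableSet_le measurable_const hg_sm.measurable.abs
    have hanti : Antitone (fun j : ℕ => {s | (j : ℝ) ≤ |g s|}) := by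
      intro i j hij s hs
      simp only [Set.mem_setOf_eq] at hs ⊢
      exact le_trans (Nat.cast_le.2 hij) hs
    have hinter : (⋂ j : ℕ, {s | (j : ℝ) ≤ |g s|}) = ∅ := by
      ext s
      simp only [Set.mem_iInter, Set.mem_setOf_eq, Set.mem_empty_iff_false, iff_false, not_forall,
        not_le]
      exact exists_nat_gt |g s|
    have htend := tendsto_measure_iInter_atTop (fun j => (hmeas j).nullMeasurableSet) hanti
      ⟨0, measure_ne_top μ _⟩
    rw [hinter, measure_empty] at htend
    obtain ⟨N, hN⟩ := ENNReal.tendsto_atTop_zero.1 htend dd hdd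
    exact ⟨N + 1, Nat.succ_pos N, hN (N + 1) (Nat.le_succ N)⟩
  rw [ENNReal.tendsto_atTop_zero]
  intro δ hδ
  rcases eq_top_or_lt_top δ with hδ' | hδ'
  · exact ⟨0, fun n _ => hδ' ▸ le_top⟩
  set d : ℝ := δ.toReal / 3 with hd
  have hd0 : 0 < d := by
    have := ENNReal.toReal_pos hδ.ne' hδ'.ne
    rw [hd]; linarith
  have hdδ : ENNReal.ofReal (d + (d + d)) ≤ δ := by
    have h3d : d + (d + d) = δ.toReal := by rw [hd]; ring
    rw [h3d, ENNReal.ofReal_toReal hδ'.ne]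
  obtain ⟨M, hM0, hMtail⟩ := htail (ENNReal.ofReal d) (ENNReal.ofReal_pos.2 hd0)
  set K : ℕ := ⌈4 * (M : ℝ) / ε⌉₊ + 1 with hK
  set c : ℕ → ℝ := fun k => -(M : ℝ) + k * (ε / 2) with hc
  set Mc : ℝ := M + K * (ε / 2) with hMc
  have hK0 : (0 : ℝ) < K := by exact_mod_cast Nat.succ_pos _
  have hMc0 : 0 ≤ Mc := by positivity
  have hcK : ∀ k, k < K → |c k| ≤ Mc := by
    intro k hk
    have hkK : (k : ℝ) ≤ K := Nat.cast_le.2 hk.le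
    have hk0 : (0 : ℝ) ≤ k := Nat.cast_nonneg k
    rw [abs_le]
    constructor
    · simp only [hc, hMc]; nlinarith
    · simp only [hc, hMc]; nlinarith
  set C : ℝ := (2 / ε) * (1 + Mc) + 1 with hCdef
  have hC1 : 1 ≤ C := by
    have : 0 ≤ (2 / ε) * (1 + Mc) := by positivity
    rw [hCdef]; linarith
  have hKC : (0 : ℝ) < K * C := by nlinarith
  set t : ℝ := d / (K * C) with htdef
  have ht0 : 0 < t := div_pos hd0 hKC
  have htd : t ≤ d := by
    rw [htdef]
    have hK1 : (1 : ℝ) ≤ K := by exact_mod_cast Nat.succ_le_succ (Nat.zero_le _)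
    exact div_le_self hd0.le (by nlinarith)
  have hev := (hTV t ht0).and (h t ht0)
  rw [eventually_atTop] at hev
  obtain ⟨N, hN⟩ := hev
  refine ⟨N, fun n hn => ?_⟩
  obtain ⟨htvn, hFatn⟩ := hN n hn
  -- slices
  set B : ℕ → Set S := fun k =>
    {s | G n s ≤ g s - ε} ∩ {s | c k ≤ g s} ∩ {s | g s < c k + ε / 2} with hB
  have hBmeas : ∀ k, MeasurableSet (B k) := by
    intro k
    exact ((measurableSet_le (hG_sm n).measurable (hg_sm.measurable.sub measurable_const)).inter
      (measurableSet_le measurable_const hg_sm.measurable)).inter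
      (measurableSet_lt hg_sm.measurable measurable_const)
  set EF : Set S := toMeasurable (μs n) {s | ¬ F n s = G n s} with hEF
  -- inclusion
  have hsub : {s | F n s ≤ f s - ε} ⊆
      ({s | ¬ f s = g s} ∪ EF) ∪ ({s | (M : ℝ) ≤ |g s|} ∪ ⋃ k ∈ Finset.range K, B k) := by
    intro s hs
    by_cases h1 : f s = g s
    · by_cases h2 : F n s = G n s
      · have hGg : G n s ≤ g s - ε := by rw [← h1, ← h2]; exact hs
        by_cases h3 : (M : ℝ) ≤ |g s|
        · exact Or.inr (Or.inl h3)
        · push_neg at h3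
          have hgl : -(M : ℝ) < g s := (abs_lt.1 h3).1
          have hgu : g s < M := (abs_lt.1 h3).2
          have hε2 : (0 : ℝ) < ε / 2 := by linarith
          set k := ⌊(g s + M) / (ε / 2)⌋₊ with hk
          have hnn : 0 ≤ (g s + M) / (ε / 2) := div_nonneg (by linarith) hε2.le
          have hfl : (k : ℝ) ≤ (g s + M) / (ε / 2) := Nat.floor_le hnn
          have hfu : (g s + M) / (ε / 2) < k + 1 := Nat.lt_floor_add_one _
          have h5 : (k : ℝ) * (ε / 2) ≤ g s + M := (le_div_iff₀ hε2).1 hfl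
          have h6 : g s + M < ((k : ℝ) + 1) * (ε / 2) := (div_lt_iff₀ hε2).1 hfu
          have hkK : k < K := by
            have hlt : (k : ℝ) < 4 * M / ε := by
              rw [lt_div_iff₀ hε]; nlinarith
            have hle : 4 * (M : ℝ) / ε ≤ (⌈4 * (M : ℝ) / ε⌉₊ : ℝ) := Nat.le_ceil _
            have : (k : ℝ) < (K : ℝ) := by
              rw [hK]; push_cast; linarith
            exact_mod_cast this
          refine Or.inr (Or.inr (Set.mem_biUnion (Finset.mem_range.2 hkK) ?_))
          refine ⟨⟨hGg, ?_⟩, ?_⟩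
          · simp only [hc, Set.mem_setOf_eq]; linarith
          · simp only [hc, Set.mem_setOf_eq]; linarith
      · exact Or.inl (Or.inr (subset_toMeasurable _ _ h2))
    · exact Or.inl (Or.inl h1)
  -- per-slice bound
  have hpiece : ∀ k, k < K → μ (B k) ≤ ENNReal.ofReal (t * C) := by
    intro k hk
    have hBk := hBmeas k
    -- extract Fatou bound for this set
    have hbdd : BddBelow (Set.range fun A : Set S => ⨅ (_ : MeasurableSet A),
        ((∫ s in A, F n s ∂μs n) - ∫ s in A, f s ∂μ)) := by
      refine ⟨min (-((∫ s, ‖F n s‖ ∂μs n) + ∫ s, ‖f s‖ ∂μ)) 0, ?_⟩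
      rintro x ⟨A, rfl⟩
      by_cases hA : MeasurableSet A
      · simp only [ciInf_pos hA]
        refine le_trans (min_le_left _ _) ?_
        have hb1 : ‖∫ s in A, F n s ∂μs n‖ ≤ ∫ s, ‖F n s‖ ∂μs n :=
          (norm_integral_le_integral_norm _).trans
            (setIntegral_le_integral (hF n).norm (Eventually.of_forall fun x => norm_nonneg _))
        have hb2 : ‖∫ s in A, f s ∂μ‖ ≤ ∫ s, ‖f s‖ ∂μ :=
          (norm_integral_le_integral_norm _).trans
            (setIntegral_le_integral hf.norm (Eventually.of_forall fun x => norm_nonneg _))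
        rw [Real.norm_eq_abs] at hb1 hb2
        have hb1' := abs_le.1 hb1
        have hb2' := abs_le.1 hb2
        linarith [hb1'.1, hb1'.2, hb2'.1, hb2'.2]
      · simp only [ciInf_neg hA, Real.sInf_empty]
        exact min_le_right _ _
    have hFatB : -t ≤ (∫ s in B k, F n s ∂μs n) - ∫ s in B k, f s ∂μ := by
      refine le_trans hFatn ?_
      exact le_trans (ciInf_le hbdd (B k)) (le_of_eq (ciInf_pos hBk))
    have hcongr1 : (∫ s in B k, F n s ∂μs n) = ∫ s in B k, G n s ∂μs n :=
      setIntegral_congr_ae hBk ((hFG n).mono fun x hx _ => hx)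
    have hcongr2 : (∫ s in B k, f s ∂μ) = ∫ s in B k, g s ∂μ :=
      setIntegral_congr_ae hBk (hgf.mono fun x hx _ => hx)
    rw [hcongr1, hcongr2] at hFatB
    have hgB : ∀ x ∈ B k, c k ≤ g x := fun x hx => hx.1.2
    have hGB : ∀ x ∈ B k, G n x ≤ c k - ε / 2 := by
      intro x hx
      have h1 : G n x ≤ g x - ε := hx.1.1
      have h2 : g x < c k + ε / 2 := hx.2
      linarith
    have := uf_piece_bound (ν := μs n) (μ := μ) hBk hε ht0.le (hcK k hk) hgB hGB
      hg_int.integrableOn (hG_int n).integrableOn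
      (htvn (B k) hBk).2 (htvn (B k) hBk).1 hFatB
    exact this
  -- assemble
  have hsum : μ (⋃ k ∈ Finset.range K, B k) ≤ ENNReal.ofReal d := by
    calc μ (⋃ k ∈ Finset.range K, B k) ≤ ∑ k ∈ Finset.range K, μ (B k) :=
          measure_biUnion_finset_le _ _
      _ ≤ ∑ _k ∈ Finset.range K, ENNReal.ofReal (t * C) :=
          Finset.sum_le_sum fun k hk => hpiece k (Finset.mem_range.1 hk)
      _ = (K : ℝ≥0∞) * ENNReal.ofReal (t * C) := by
          rw [Finset.sum_const, Finset.card_range, nsmul_eq_mul]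
      _ = ENNReal.ofReal ((K : ℝ) * (t * C)) := by
          rw [← ENNReal.ofReal_natCast K, ← ENNReal.ofReal_mul (Nat.cast_nonneg K)]
      _ ≤ ENNReal.ofReal d := by
          refine ENNReal.ofReal_le_ofReal (le_of_eq ?_)
          have hKne : (K : ℝ) ≠ 0 := hK0.ne'
          have hCne : C ≠ 0 := by positivity
          rw [htdef]
          exact uf_alg hKne hCne
  have hEFbound : μ EF ≤ ENNReal.ofReal d := by
    have hEFmeas : MeasurableSet EF := measurableSet_toMeasurable _ _
    have h0 : μs n EF = 0 := by
      rw [hEF, measure_toMeasurable]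
      exact (hFG n)
    calc μ EF ≤ μs n EF + ENNReal.ofReal t := (htvn EF hEFmeas).2
      _ = ENNReal.ofReal t := by rw [h0, zero_add]
      _ ≤ ENNReal.ofReal d := ENNReal.ofReal_le_ofReal htd
  have hfg0 : μ {s | ¬ f s = g s} = 0 := hgf
  calc μ {s | F n s ≤ f s - ε}
      ≤ μ (({s | ¬ f s = g s} ∪ EF) ∪ ({s | (M : ℝ) ≤ |g s|} ∪ ⋃ k ∈ Finset.range K, B k)) :=
        measure_mono hsub
    _ ≤ (μ {s | ¬ f s = g s} + μ EF) + (μ {s | (M : ℝ) ≤ |g s|} + μ (⋃ k ∈ Finset.range K, B k)) :=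
        le_trans (measure_union_le _ _) (add_le_add (measure_union_le _ _) (measure_union_le _ _))
    _ ≤ (0 + ENNReal.ofReal d) + (ENNReal.ofReal d + ENNReal.ofReal d) :=
        add_le_add (add_le_add (le_of_eq hfg0) hEFbound) (add_le_add hMtail hsum)
    _ = ENNReal.ofReal (d + (d + d)) := by
        rw [zero_add, ← ENNReal.ofReal_add hd0.le hd0.le, ← ENNReal.ofReal_add hd0.le (by linarith : (0:ℝ) ≤ d + d)]
    _ ≤ δ := hdδ
end

section
/- Let $(S,\Sigma)$ be a measurable space, $\{\mu^{(n)},\mu\}$ finite measures, $f \in L^1(S;\mu)$, and $f^{(n)} \in L^1(S;\mu^{(n)})$ for each $n$. Suppose (a) $\liminf_{n\to\infty} \inf_{A \in \Sigma} (\int_A f^{(n)}\,d\mu^{(n)} - \int_A f\,d\mu) \ge 0$, and (b) for each $\varepsilon>0$, $\mu(\{s: f^{(n)}(s) \le f(s)-\varepsilon\}) \to 0$. Then $\liminf_{K\to+\infty} \inf_{n\ge 1} \int_S f^{(n)}(s)\,\mathbf{1}\{f^{(n)}(s) \le -K\}\,\mu^{(n)}(ds) \ge 0$. -/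
open MeasureTheory Filter Topology

lemma abs_cont {S : Type*} [MeasurableSpace S] {ν : Measure S} {g : S → ℝ}
    (hg : Integrable g ν) {ε : ℝ} (hε : 0 < ε) :
    ∃ δ : ENNReal, 0 < δ ∧ ∀ s : Set S, ν s < δ → |∫ x in s, g x ∂ν| ≤ ε := by
  have hfin : (∫⁻ a, ‖g a‖₊ ∂ν) ≠ ⊤ := hg.2.ne
  obtain ⟨δ, hδ, h⟩ := exists_pos_setLIntegral_lt_of_measure_lt (μ := ν)
    (f := fun x => (‖g x‖₊ : ENNReal)) hfin (ENNReal.ofReal_pos.mpr hε).ne'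
  refine ⟨δ, hδ, fun s hs => ?_⟩
  have h1 : |∫ x in s, g x ∂ν| ≤ (∫⁻ x in s, (‖g x‖₊ : ENNReal) ∂ν).toReal := by
    have := norm_integral_le_lintegral_norm (μ := ν.restrict s) g
    simpa [← enorm_eq_nnnorm, ← ofReal_norm] using this
  calc |∫ x in s, g x ∂ν| ≤ (∫⁻ x in s, (‖g x‖₊ : ENNReal) ∂ν).toReal := h1
    _ ≤ ε := ENNReal.toReal_le_of_le_ofReal hε.le (h s hs).le

lemma markov_tail {S : Type*} [MeasurableSpace S] {ν : Measure S} {g : S → ℝ}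
    (hg : Integrable g ν) {δ : ENNReal} (hδ : 0 < δ) :
    ∃ K₀ : ℝ, 0 < K₀ ∧ ∀ K, K₀ ≤ K → ν {x | g x ≤ -K} < δ := by
  set I := ∫⁻ a, (‖g a‖₊ : ENNReal) ∂ν with hI
  have hIfin : I ≠ ⊤ := hg.2.ne
  obtain ⟨m, hm⟩ := ENNReal.exists_nat_gt (ENNReal.div_lt_top hIfin hδ.ne').ne
  set K₀ : ℝ := m + 1 with hK₀
  have hK₀pos : 0 < K₀ := by positivity
  refine ⟨K₀, hK₀pos, fun K hK => ?_⟩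
  have hsub : {x | g x ≤ -K} ⊆ {x | ENNReal.ofReal K₀ ≤ (‖g x‖₊ : ENNReal)} := by
    intro x hx
    simp only [Set.mem_setOf_eq] at hx ⊢
    have : K₀ ≤ |g x| := le_abs.mpr (Or.inr (by linarith))
    calc ENNReal.ofReal K₀ ≤ ENNReal.ofReal |g x| := ENNReal.ofReal_le_ofReal this
      _ = (‖g x‖₊ : ENNReal) := by
          rw [← enorm_eq_nnnorm, ← ofReal_norm, Real.norm_eq_abs]
  have hmark : ν {x | g x ≤ -K} ≤ I / ENNReal.ofReal K₀ := by
    refine (measure_mono hsub).trans ?_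
    exact meas_ge_le_lintegral_div hg.aestronglyMeasurable.enorm
      (ENNReal.ofReal_pos.mpr hK₀pos).ne' ENNReal.ofReal_ne_top
  refine hmark.trans_lt ?_
  -- I / ofReal K₀ < δ since I / δ < m ≤ ofReal K₀ ... handle cases
  rcases eq_or_ne δ ⊤ with hδt | hδt
  · rw [hδt]; exact ENNReal.div_lt_top hIfin (ENNReal.ofReal_pos.mpr hK₀pos).ne'
  · have hmle : (m : ENNReal) ≤ ENNReal.ofReal K₀ := by
      rw [hK₀]
      simpa using ENNReal.ofReal_le_ofReal (by linarith : (m:ℝ) ≤ (m:ℝ) + 1)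
    have h1 : I < (m : ENNReal) * δ := by
      rw [ENNReal.div_lt_iff (Or.inl hδ.ne') (Or.inl hδt)] at hm
      exact hm
    rw [ENNReal.div_lt_iff (Or.inl (ENNReal.ofReal_pos.mpr hK₀pos).ne')
      (Or.inl ENNReal.ofReal_ne_top)]
    calc I < (m : ENNReal) * δ := h1
      _ ≤ δ * ENNReal.ofReal K₀ := by rw [mul_comm]; exact mul_le_mul_right hmle δ

lemma single_n {S : Type*} [MeasurableSpace S] {ν : Measure S} {g : S → ℝ}
    (hg : Integrable g ν) {ε : ℝ} (hε : 0 < ε) :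
    ∃ K₀ : ℝ, ∀ K, K₀ ≤ K → -ε ≤ ∫ x in {x | g x ≤ -K}, g x ∂ν := by
  obtain ⟨δ, hδ, hac⟩ := abs_cont hg hε
  obtain ⟨K₀, _, hm⟩ := markov_tail hg hδ
  exact ⟨K₀, fun K hK => neg_le_of_abs_le (hac _ (hm K hK))⟩

/-- If the uniform Fatou inequality (1.1) and condition (1.2) hold for finite measures,
then the lower uniform integrability condition (1.4) holds. -/
theorem uniform_fatou_stmt3 {S : Type*} [MeasurableSpace S]
    (μs : ℕ → Measure S) (μ : Measure S)
    [∀ n, IsFiniteMeasure (μs n)] [IsFiniteMeasure μ]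
    (f : S → ℝ) (F : ℕ → S → ℝ)
    (hf : Integrable f μ) (hF : ∀ n, Integrable (F n) (μs n))
    (ha : ∀ ε : ℝ, 0 < ε → ∀ᶠ n in atTop,
      -ε ≤ ⨅ (A : Set S) (_ : MeasurableSet A),
        (∫ s in A, F n s ∂(μs n) - ∫ s in A, f s ∂μ))
    (hb : ∀ ε : ℝ, 0 < ε →
      Tendsto (fun n => μ {s | F n s ≤ f s - ε}) atTop (𝓝 0)) :
    ∀ ε : ℝ, 0 < ε → ∃ K₀ : ℝ, ∀ K ≥ K₀, ∀ n,
      -ε ≤ ∫ s in {x | F n x ≤ -K}, F n s ∂(μs n) := by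
  intro ε hε
  have hε2 : 0 < ε / 2 := by linarith
  obtain ⟨δ0, hδ0, hac⟩ := abs_cont hf hε2
  have hδ02 : 0 < δ0 / 2 := ENNReal.half_pos hδ0.ne'
  obtain ⟨N₁, hN₁⟩ := eventually_atTop.mp (ha (ε / 2) hε2)
  obtain ⟨N₂, hN₂⟩ := eventually_atTop.mp ((hb 1 one_pos).eventually_lt_const hδ02)
  obtain ⟨K₁, hK₁pos, hK₁⟩ := markov_tail hf hδ02
  set N := max N₁ N₂ with hN
  choose k hk using fun n => single_n (hF n) hε
  have hne : (Finset.range (N + 1)).Nonempty :=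
    Finset.nonempty_range_iff.mpr (Nat.succ_ne_zero N)
  refine ⟨max (K₁ + 1) ((Finset.range (N + 1)).sup' hne k), fun K hK n => ?_⟩
  by_cases hn : n < N
  · refine hk n K ?_
    refine le_trans (Finset.le_sup' k ?_) (le_trans (le_max_right _ _) hK)
    simp only [Finset.mem_range]; omega
  · push_neg at hn
    have hKK₁ : K₁ + 1 ≤ K := le_trans (le_max_left _ _) hK
    set A₀ : Set S := {x | F n x ≤ -K} with hA₀def
    set A : Set S := toMeasurable (μs n) A₀ with hAdef
    set B : Set S := {s | F n s ≤ f s - 1} with hBdef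
    set C : Set S := {x | f x ≤ -(K - 1)} with hCdef
    have hμB : μ B < δ0 / 2 := hN₂ n (le_trans (le_max_right N₁ N₂) hn)
    have hμC : μ C < δ0 / 2 := hK₁ (K - 1) (by linarith)
    set D : Set S := toMeasurable μ B ∪ toMeasurable μ C with hDdef
    have hD : MeasurableSet D :=
      (measurableSet_toMeasurable _ _).union (measurableSet_toMeasurable _ _)
    have hμD : μ D < δ0 := by
      calc μ D ≤ μ (toMeasurable μ B) + μ (toMeasurable μ C) := measure_union_le _ _
        _ = μ B + μ C := by rw [measure_toMeasurable, measure_toMeasurable]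
        _ < δ0 / 2 + δ0 / 2 := ENNReal.add_lt_add hμB hμC
        _ = δ0 := ENNReal.add_halves δ0
    have hA₀D : A₀ ⊆ D := by
      intro x hx
      by_cases hxB : F n x ≤ f x - 1
      · exact Or.inl (subset_toMeasurable _ _ hxB)
      · refine Or.inr (subset_toMeasurable _ _ ?_)
        simp only [hCdef, Set.mem_setOf_eq]
        simp only [hA₀def, Set.mem_setOf_eq] at hx
        push_neg at hxB
        linarith
    set A' : Set S := A ∩ D with hA'def
    have hA' : MeasurableSet A' := (measurableSet_toMeasurable _ _).inter hD
    have hres : (μs n).restrict A' = (μs n).restrict A₀ := by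
      calc (μs n).restrict A' = (μs n).restrict (D ∩ A) := by rw [hA'def, Set.inter_comm]
        _ = ((μs n).restrict A).restrict D := (Measure.restrict_restrict hD).symm
        _ = ((μs n).restrict A₀).restrict D := by
            rw [hAdef, Measure.restrict_toMeasurable (measure_ne_top _ _)]
        _ = (μs n).restrict (D ∩ A₀) := Measure.restrict_restrict hD
        _ = (μs n).restrict A₀ := by rw [Set.inter_eq_self_of_subset_right hA₀D]
    have hint_eq : ∫ x in A₀, F n x ∂(μs n) = ∫ x in A', F n x ∂(μs n) := by
      rw [hres]
    have hinf := hN₁ n (le_trans (le_max_left N₁ N₂) hn)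
    have hbdd : BddBelow (Set.range fun A : Set S =>
        ⨅ (_ : MeasurableSet A), (∫ s in A, F n s ∂(μs n) - ∫ s in A, f s ∂μ)) := by
      refine ⟨-((∫ x, ‖F n x‖ ∂(μs n)) + ∫ x, ‖f x‖ ∂μ), ?_⟩
      rintro y ⟨T, rfl⟩
      dsimp only
      have hnn1 : (0:ℝ) ≤ ∫ x, ‖F n x‖ ∂(μs n) := integral_nonneg fun x => norm_nonneg _
      have hnn2 : (0:ℝ) ≤ ∫ x, ‖f x‖ ∂μ := integral_nonneg fun x => norm_nonneg _
      by_cases hT : MeasurableSet T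
      · rw [ciInf_pos hT]
        have h1 : |∫ s in T, F n s ∂(μs n)| ≤ ∫ x, ‖F n x‖ ∂(μs n) :=
          (norm_integral_le_integral_norm _).trans
            (setIntegral_le_integral (hF n).norm (Filter.Eventually.of_forall fun x => norm_nonneg _))
        have h2 : |∫ s in T, f s ∂μ| ≤ ∫ x, ‖f x‖ ∂μ :=
          (norm_integral_le_integral_norm _).trans
            (setIntegral_le_integral hf.norm (Filter.Eventually.of_forall fun x => norm_nonneg _))
        rw [abs_le] at h1 h2
        linarith [h1.1, h2.2]
      · haveI : IsEmpty (MeasurableSet T) := ⟨hT⟩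
        rw [Real.iInf_of_isEmpty]
        linarith
    have key : -(ε / 2) ≤ ∫ s in A', F n s ∂(μs n) - ∫ s in A', f s ∂μ := by
      refine hinf.trans (le_trans (ciInf_le hbdd A') ?_)
      rw [ciInf_pos hA']
    have hμA' : μ A' < δ0 := lt_of_le_of_lt (measure_mono Set.inter_subset_right) hμD
    have hfA' : -(ε / 2) ≤ ∫ x in A', f x ∂μ := neg_le_of_abs_le (hac A' hμA')
    calc -ε = -(ε/2) + -(ε/2) := by ring
      _ ≤ (∫ s in A', F n s ∂(μs n) - ∫ s in A', f s ∂μ) + ∫ x in A', f x ∂μ := by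
          exact add_le_add key hfA'
      _ = ∫ s in A', F n s ∂(μs n) := by ring
      _ = ∫ s in A₀, F n s ∂(μs n) := hint_eq.symm
end

section
/- Let $(S,\Sigma)$ be a measurable space, $\{\mu^{(n)}\}$ finite measures converging in total variation to a measure $\mu$, $f \in L^1(S;\mu)$, and $f^{(n)} \in L^1(S;\mu^{(n)})$. Suppose (i) for each $\varepsilon>0$, $\mu(\{s: f^{(n)}(s) \le f(s)-\varepsilon\}) \to 0$, and (ii) $\liminf_{K\to+\infty}\inf_{n\ge 1}\int_S f^{(n)}\mathbf{1}\{f^{(n)} \le -K\}\,d\mu^{(n)} \ge 0$. Then $\liminf_{n\to\infty}\inf_{A\in\Sigma}(\int_A f^{(n)}\,d\mu^{(n)} - \int_A f\,d\mu) \ge 0$. -/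
set_option maxHeartbeats 1000000
open MeasureTheory Filter Topology
open scoped ENNReal NNReal

lemma uf_lemA {S : Type*} [MeasurableSpace S] {μ ν : Measure S} {θ : ℝ≥0∞}
    (h : ∀ A : Set S, MeasurableSet A → μ A ≤ ν A + θ) {g : S → ℝ} (hg : Measurable g)
    (hg0 : ∀ x, 0 ≤ g x) {M : ℝ} (hM : 0 ≤ M) (hgM : ∀ x, g x ≤ M) {E : Set S}
    (hE : MeasurableSet E) :
    ∫⁻ x in E, ENNReal.ofReal (g x) ∂μ ≤
      ∫⁻ x in E, ENNReal.ofReal (g x) ∂ν + ENNReal.ofReal M * θ := by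
  rw [lintegral_eq_lintegral_meas_lt _ (ae_of_all _ hg0) hg.aemeasurable,
      lintegral_eq_lintegral_meas_lt _ (ae_of_all _ hg0) hg.aemeasurable]
  have hsplit : Set.Ioi (0:ℝ) = Set.Ioc 0 M ∪ Set.Ioi M := (Set.Ioc_union_Ioi_eq_Ioi hM).symm
  have hrest : ∀ t : ℝ, (μ.restrict E) {a | t < g a} ≤ (ν.restrict E) {a | t < g a} + θ := by
    intro t
    have hms : MeasurableSet {a | t < g a} := measurableSet_lt measurable_const hg
    rw [Measure.restrict_apply hms, Measure.restrict_apply hms]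
    exact h _ (hms.inter hE)
  have hanti : Antitone fun t : ℝ => (ν.restrict E) {a | t < g a} + θ := by
    intro t₁ t₂ hle
    exact add_le_add_left (measure_mono fun a ha => lt_of_le_of_lt hle ha) θ
  calc ∫⁻ t in Set.Ioi (0:ℝ), (μ.restrict E) {a | t < g a}
      = ∫⁻ t in Set.Ioc 0 M, (μ.restrict E) {a | t < g a} := by
        rw [hsplit, lintegral_union measurableSet_Ioi (Set.Ioc_disjoint_Ioi le_rfl)]
        have hz : ∀ t ∈ Set.Ioi M, (μ.restrict E) {a | t < g a} = 0 := by
          intro t ht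
          have : {a | t < g a} = ∅ :=
            Set.eq_empty_of_forall_notMem fun a ha => absurd ha (not_lt.2 ((hgM a).trans ht.le))
          simp [this]
        rw [setLIntegral_congr_fun measurableSet_Ioi hz]
        simp
    _ ≤ ∫⁻ t in Set.Ioc 0 M, ((ν.restrict E) {a | t < g a} + θ) :=
        setLIntegral_mono hanti.measurable fun t _ => hrest t
    _ = (∫⁻ t in Set.Ioc 0 M, (ν.restrict E) {a | t < g a}) + θ * volume (Set.Ioc 0 M) := by
        rw [lintegral_add_right _ measurable_const, lintegral_const,
          Measure.restrict_apply_univ]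
    _ ≤ (∫⁻ t in Set.Ioi (0:ℝ), (ν.restrict E) {a | t < g a}) + ENNReal.ofReal M * θ := by
        refine add_le_add (lintegral_mono_set ?_) ?_
        · rw [hsplit]; exact Set.subset_union_left
        · rw [Real.volume_Ioc, mul_comm]
          simp

lemma uf_lemA' {S : Type*} [MeasurableSpace S] {μ ν : Measure S} [IsFiniteMeasure ν] {τ : ℝ}
    (hτ : 0 ≤ τ) (h : ∀ A : Set S, MeasurableSet A → μ A ≤ ν A + ENNReal.ofReal τ)
    {g : S → ℝ} (hg : Measurable g) (hg0 : ∀ x, 0 ≤ g x) {M : ℝ} (hM : 0 ≤ M)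
    (hgM : ∀ x, g x ≤ M) {E : Set S} (hE : MeasurableSet E) :
    ∫ x in E, g x ∂μ ≤ (∫ x in E, g x ∂ν) + M * τ := by
  have key := uf_lemA h hg hg0 hM hgM hE
  have hνfin : ∫⁻ x in E, ENNReal.ofReal (g x) ∂ν ≠ ⊤ := by
    refine ne_of_lt (lt_of_le_of_lt (lintegral_mono fun x => ENNReal.ofReal_le_ofReal (hgM x)) ?_)
    rw [setLIntegral_const]
    exact ENNReal.mul_lt_top ENNReal.ofReal_lt_top (measure_lt_top _ _)
  rw [integral_eq_lintegral_of_nonneg_ae (ae_of_all _ hg0) hg.aestronglyMeasurable,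
      integral_eq_lintegral_of_nonneg_ae (ae_of_all _ hg0) hg.aestronglyMeasurable]
  have hfin2 : ENNReal.ofReal M * ENNReal.ofReal τ ≠ ⊤ := by
    exact ne_of_lt (ENNReal.mul_lt_top ENNReal.ofReal_lt_top ENNReal.ofReal_lt_top)
  calc (∫⁻ x in E, ENNReal.ofReal (g x) ∂μ).toReal
      ≤ ((∫⁻ x in E, ENNReal.ofReal (g x) ∂ν) + ENNReal.ofReal M * ENNReal.ofReal τ).toReal := by
        refine ENNReal.toReal_mono ?_ key
        exact ENNReal.add_ne_top.2 ⟨hνfin, hfin2⟩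
    _ = (∫⁻ x in E, ENNReal.ofReal (g x) ∂ν).toReal + M * τ := by
        rw [ENNReal.toReal_add hνfin hfin2, ← ENNReal.ofReal_mul hM,
          ENNReal.toReal_ofReal (mul_nonneg hM hτ)]

lemma uf_lemB {S : Type*} [MeasurableSpace S] {μ ν : Measure S} [IsFiniteMeasure μ]
    [IsFiniteMeasure ν] {τ : ℝ} (hτ : 0 ≤ τ)
    (hμν : ∀ A : Set S, MeasurableSet A → μ A ≤ ν A + ENNReal.ofReal τ)
    (hνμ : ∀ A : Set S, MeasurableSet A → ν A ≤ μ A + ENNReal.ofReal τ)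
    {g : S → ℝ} (hg : Measurable g) {K : ℝ} (hK : 0 ≤ K) (hb : ∀ x, |g x| ≤ K)
    {E : Set S} (hE : MeasurableSet E) :
    (∫ x in E, g x ∂μ) - 3 * K * τ ≤ ∫ x in E, g x ∂ν := by
  set h : S → ℝ := fun x => g x + K with hh
  have hintμ : Integrable g (μ.restrict E) :=
    ((integrable_const K).mono' hg.aestronglyMeasurable
      (ae_of_all _ fun x => by simpa [Real.norm_eq_abs] using hb x)).restrict
  have hintν : Integrable g (ν.restrict E) :=
    ((integrable_const K).mono' hg.aestronglyMeasurable
      (ae_of_all _ fun x => by simpa [Real.norm_eq_abs] using hb x)).restrict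
  have hμE : ∫ x in E, h x ∂μ = (∫ x in E, g x ∂μ) + K * (μ E).toReal := by
    rw [integral_add hintμ (integrable_const K), setIntegral_const, smul_eq_mul, mul_comm]; rfl
  have hνE : ∫ x in E, h x ∂ν = (∫ x in E, g x ∂ν) + K * (ν E).toReal := by
    rw [integral_add hintν (integrable_const K), setIntegral_const, smul_eq_mul, mul_comm]; rfl
  have hA := uf_lemA' (g := h) (M := 2 * K) hτ hμν (hg.add measurable_const)
    (fun x => by have h1 := neg_abs_le (g x); have h2 := hb x; simp only [hh]; linarith)
    (by linarith)
    (fun x => by have h1 := abs_le.1 (hb x); simp only [hh]; linarith) hE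
  have hνμE : (ν E).toReal ≤ (μ E).toReal + τ := by
    have h1 : ν E ≤ ENNReal.ofReal ((μ E).toReal + τ) := by
      calc ν E ≤ μ E + ENNReal.ofReal τ := hνμ E hE
        _ = ENNReal.ofReal ((μ E).toReal + τ) := by
            rw [ENNReal.ofReal_add ENNReal.toReal_nonneg hτ, ENNReal.ofReal_toReal
              (measure_ne_top _ _)]
    exact ENNReal.toReal_le_of_le_ofReal (by positivity) h1
  nlinarith [hA, hμE, hνE, hνμE, measure_lt_top μ E]

lemma uf_conv {S : Type*} [MeasurableSpace S] {μ : Measure S} {φ : S → ℝ} (hφ : Measurable φ)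
    {E : Set S} {δ : ℝ} (hδ : 0 ≤ δ)
    (h : ∫⁻ x in E, ENNReal.ofReal |φ x| ∂μ ≤ ENNReal.ofReal δ) :
    ∫ x in E, |φ x| ∂μ ≤ δ := by
  rw [integral_eq_lintegral_of_nonneg_ae (ae_of_all _ fun x => abs_nonneg _)
    hφ.abs.aestronglyMeasurable]
  exact le_trans (ENNReal.toReal_mono ENNReal.ofReal_ne_top h)
    (le_of_eq (ENNReal.toReal_ofReal hδ))

/-- Conditions (i) and (ii) imply the uniform Fatou inequality (1.1) for finite measures
converging in total variation. -/
theorem uniform_fatou_stmt4 {S : Type*} [MeasurableSpace S]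
    (μs : ℕ → Measure S) (μ : Measure S) [∀ n, IsFiniteMeasure (μs n)]
    (htv : Tendsto (fun n => ⨆ (A : Set S) (_ : MeasurableSet A),
      (μs n A - μ A) + (μ A - μs n A)) atTop (𝓝 0))
    (f : S → ℝ) (F : ℕ → S → ℝ)
    (hf : Integrable f μ) (hF : ∀ n, Integrable (F n) (μs n))
    (hi : ∀ ε : ℝ, 0 < ε →
      Tendsto (fun n => μ {s | F n s ≤ f s - ε}) atTop (𝓝 0))
    (hii : ∀ ε : ℝ, 0 < ε → ∃ K₀ : ℝ, ∀ K ≥ K₀, ∀ n,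
      -ε ≤ ∫ s in {x | F n x ≤ -K}, F n s ∂(μs n)) :
    ∀ ε : ℝ, 0 < ε → ∀ᶠ n in atTop,
      -ε ≤ ⨅ (A : Set S) (_ : MeasurableSet A),
        (∫ s in A, F n s ∂(μs n) - ∫ s in A, f s ∂μ) := by
  intro ε hε
  classical
  set tv : ℕ → ℝ≥0∞ := fun n => ⨆ (A : Set S) (_ : MeasurableSet A),
      (μs n A - μ A) + (μ A - μs n A) with htvdef
  have tvb : ∀ (n : ℕ) (c : ℝ≥0∞), tv n < c → ∀ A : Set S, MeasurableSet A →
      μs n A ≤ μ A + c ∧ μ A ≤ μs n A + c := by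
    intro n c hc A hA
    have h1 : (μs n A - μ A) + (μ A - μs n A) ≤ tv n := by
      simp only [htvdef]
      exact le_trans
        (le_iSup (fun _ : MeasurableSet A => (μs n A - μ A) + (μ A - μs n A)) hA)
        (le_iSup (fun A : Set S => ⨆ (_ : MeasurableSet A),
          (μs n A - μ A) + (μ A - μs n A)) A)
    have h2 : μs n A - μ A ≤ c := le_trans (le_trans le_self_add h1) hc.le
    have h3 : μ A - μs n A ≤ c := le_trans (le_trans le_add_self h1) hc.le
    constructor
    · have := tsub_le_iff_right.1 h2; rwa [add_comm] at this
    · have := tsub_le_iff_right.1 h3; rwa [add_comm] at this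
  obtain ⟨n₁, hn₁⟩ := (htv.eventually_lt_const (zero_lt_one (α := ℝ≥0∞))).exists
  haveI hμfin : IsFiniteMeasure μ := by
    refine ⟨lt_of_le_of_lt ((tvb n₁ 1 hn₁ Set.univ MeasurableSet.univ).2) ?_⟩
    exact ENNReal.add_lt_top.2 ⟨measure_lt_top _ _, ENNReal.one_lt_top⟩
  obtain ⟨f', hf'meas, hff'⟩ : ∃ f' : S → ℝ, Measurable f' ∧ f =ᵐ[μ] f' :=
    ⟨hf.1.aemeasurable.mk f, hf.1.aemeasurable.measurable_mk, hf.1.aemeasurable.ae_eq_mk⟩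
  have hf'int : Integrable f' μ := hf.congr hff'
  have hFex : ∀ n, ∃ g : S → ℝ, Measurable g ∧ F n =ᵐ[μs n] g := fun n =>
    ⟨(hF n).1.aemeasurable.mk (F n), (hF n).1.aemeasurable.measurable_mk,
      (hF n).1.aemeasurable.ae_eq_mk⟩
  choose F' hF'meas hFF' using hFex
  have hF'int : ∀ n, Integrable (F' n) (μs n) := fun n => (hF n).congr (hFF' n)
  set M := (μ Set.univ).toReal with hMdef
  have hM : 0 ≤ M := ENNReal.toReal_nonneg
  set δ := ε / 10 with hδdef
  have hδ : 0 < δ := by positivity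
  set γ := δ / (1 + M) with hγdef
  have hγ : 0 < γ := by positivity
  have hγM : γ * M ≤ δ := by
    rw [hγdef, div_mul_eq_mul_div, div_le_iff₀ (by linarith)]
    nlinarith
  have hItop : ∫⁻ x, ENNReal.ofReal |f' x| ∂μ ≠ ⊤ := by
    have h0 := hf'int.hasFiniteIntegral
    rw [hasFiniteIntegral_iff_norm] at h0
    simpa [Real.norm_eq_abs] using h0.ne
  obtain ⟨δ', hδ'pos, hδ'⟩ := exists_pos_setLIntegral_lt_of_measure_lt hItop
    (ε := ENNReal.ofReal δ) (ENNReal.ofReal_pos.2 hδ).ne'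
  have habs : ∀ E : Set S, μ E < δ' → ∫ x in E, |f' x| ∂μ ≤ δ :=
    fun E hE => uf_conv hf'meas hδ.le (hδ' E hE).le
  -- tail sets
  have htail : ∀ᶠ j : ℕ in atTop, μ {x | (j:ℝ) ≤ |f' x|} < δ' := by
    have hmeas : ∀ j : ℕ, NullMeasurableSet {x | (j:ℝ) ≤ |f' x|} μ := fun j =>
      (measurableSet_le measurable_const hf'meas.abs).nullMeasurableSet
    have hanti : Antitone fun j : ℕ => {x | (j:ℝ) ≤ |f' x|} := by
      intro j k hjk x hx
      simp only [Set.mem_setOf_eq] at hx ⊢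
      exact le_trans (by exact_mod_cast hjk) hx
    have hiInt : (⋂ j : ℕ, {x | (j:ℝ) ≤ |f' x|}) = ∅ := by
      ext x
      simp only [Set.mem_iInter, Set.mem_setOf_eq, Set.mem_empty_iff_false, iff_false, not_forall,
        not_le]
      obtain ⟨j, hj⟩ := exists_nat_gt |f' x|
      exact ⟨j, hj⟩
    have hten := tendsto_measure_iInter_atTop hmeas hanti ⟨0, measure_ne_top _ _⟩
    rw [hiInt, measure_empty] at hten
    exact hten.eventually_lt_const hδ'pos
  obtain ⟨j₁, hj₁⟩ := htail.exists
  obtain ⟨K₀, hK₀⟩ := hii δ hδ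
  set K := max (max K₀ (j₁:ℝ)) (max 1 γ) with hKdef
  have hK1 : (1:ℝ) ≤ K := le_trans (le_max_left 1 γ) (le_max_right _ _)
  have hKpos : (0:ℝ) < K := lt_of_lt_of_le one_pos hK1
  have hKγ : γ ≤ K := le_trans (le_max_right 1 γ) (le_max_right _ _)
  have hKK₀ : K₀ ≤ K := le_trans (le_max_left _ _) (le_max_left _ _)
  have hKj : (j₁:ℝ) ≤ K := le_trans (le_max_right _ _) (le_max_left _ _)
  set τ := δ / (3 * K) with hτdef
  have hτ : 0 < τ := by positivity
  set ρ : ℝ≥0∞ := min δ' (ENNReal.ofReal (δ / K)) with hρdef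
  have hρ0 : ρ ≠ 0 := (lt_min hδ'pos (ENNReal.ofReal_pos.2 (by positivity))).ne'
  have hρtop : ρ ≠ ⊤ := ne_top_of_le_ne_top ENNReal.ofReal_ne_top (min_le_right _ _)
  have hρ4 : (0:ℝ≥0∞) < ρ / 4 := ENNReal.div_pos hρ0 (by norm_num)
  set c : ℝ≥0∞ := min (ENNReal.ofReal τ) (ρ / 4) with hcdef
  have hc0 : (0:ℝ≥0∞) < c := lt_min (ENNReal.ofReal_pos.2 hτ) hρ4
  filter_upwards [htv.eventually_lt_const hc0, (hi γ hγ).eventually_lt_const hρ4] with n h1 h2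
  have hcomp := tvb n c h1
  have hcompτ : ∀ A : Set S, MeasurableSet A →
      μs n A ≤ μ A + ENNReal.ofReal τ ∧ μ A ≤ μs n A + ENNReal.ofReal τ := by
    intro A hA
    obtain ⟨u, v⟩ := hcomp A hA
    exact ⟨u.trans (add_le_add_right (min_le_left _ _) _),
      v.trans (add_le_add_right (min_le_left _ _) _)⟩
  set N := toMeasurable (μs n) {x | F n x ≠ F' n x} with hNdef
  have hNmeas : MeasurableSet N := measurableSet_toMeasurable (μs n) _
  have hN0 : μs n N = 0 := by
    rw [hNdef, measure_toMeasurable]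
    exact ae_iff.1 (hFF' n)
  have hNμ : μ N ≤ ρ / 4 := by
    calc μ N ≤ μs n N + c := (hcomp N hNmeas).2
      _ = c := by rw [hN0, zero_add]
      _ ≤ ρ / 4 := min_le_right _ _
  set D := {x | F' n x ≤ f' x - γ} with hDdef
  have hDmeas : MeasurableSet D := measurableSet_le (hF'meas n) (hf'meas.sub measurable_const)
  have hDsub : D ⊆ {s | F n s ≤ f s - γ} ∪ N ∪ {x | ¬ f x = f' x} := by
    intro x hx
    by_cases h3 : F n x = F' n x
    · by_cases h4 : f x = f' x
      · left; left
        show F n x ≤ f x - γ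
        rw [h3, h4]; exact hx
      · right; exact h4
    · left; right; exact subset_toMeasurable _ _ h3
  have hfnull : μ {x | ¬ f x = f' x} = 0 := ae_iff.1 hff'
  have h42 : ρ / 4 + ρ / 4 = ρ / 2 := by
    rw [ENNReal.div_add_div_same, ← two_mul, show (4:ℝ≥0∞) = 2 * 2 from by norm_num,
      ENNReal.mul_div_mul_left _ _ two_ne_zero ENNReal.ofNat_ne_top]
  have hDμ : μ D < ρ := by
    calc μ D ≤ μ ({s | F n s ≤ f s - γ} ∪ N ∪ {x | ¬ f x = f' x}) := measure_mono hDsub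
      _ ≤ μ ({s | F n s ≤ f s - γ} ∪ N) + μ {x | ¬ f x = f' x} := measure_union_le _ _
      _ = μ ({s | F n s ≤ f s - γ} ∪ N) := by rw [hfnull, add_zero]
      _ ≤ μ {s | F n s ≤ f s - γ} + μ N := measure_union_le _ _
      _ ≤ ρ / 4 + ρ / 4 := add_le_add h2.le hNμ
      _ = ρ / 2 := h42
      _ < ρ := ENNReal.half_lt_self hρ0 hρtop
  have hDδ' : μ D < δ' := lt_of_lt_of_le hDμ (min_le_left _ _)
  have hDK : (μ D).toReal ≤ δ / K := ENNReal.toReal_le_of_le_ofReal (by positivity)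
    (lt_of_lt_of_le hDμ (min_le_right _ _)).le
  set g : S → ℝ := fun x => max (min (f' x) K - γ) (-K) with hgdef
  have hgmeas : Measurable g :=
    ((hf'meas.min measurable_const).sub measurable_const).max measurable_const
  have hgbd : ∀ x, |g x| ≤ K := by
    intro x
    rw [abs_le]
    refine ⟨le_max_right _ _, max_le ?_ (by linarith)⟩
    have := min_le_right (f' x) K
    linarith
  have hgintμ : Integrable g μ := (integrable_const K).mono' hgmeas.aestronglyMeasurable
    (ae_of_all _ fun x => by simpa [Real.norm_eq_abs] using hgbd x)
  have hgintn : Integrable g (μs n) := (integrable_const K).mono' hgmeas.aestronglyMeasurable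
    (ae_of_all _ fun x => by simpa [Real.norm_eq_abs] using hgbd x)
  set T := {x | F' n x ≤ -K} with hTdef
  have hTmeas : MeasurableSet T := measurableSet_le (hF'meas n) measurable_const
  have main : ∀ A : Set S, MeasurableSet A →
      -ε ≤ (∫ s in A, F n s ∂μs n) - ∫ s in A, f s ∂μ := by
    intro A hA
    have eq1 : ∫ s in A, F n s ∂μs n = ∫ s in A, F' n s ∂μs n :=
      integral_congr_ae (ae_restrict_of_ae (hFF' n))
    have eq2 : ∫ s in A, f s ∂μ = ∫ s in A, f' s ∂μ :=
      integral_congr_ae (ae_restrict_of_ae hff')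
    rw [eq1, eq2]
    set B := A ∩ T with hBdef
    set C := A ∩ Tᶜ with hCdef
    set P := {x | f' x - γ < F' n x} with hPdef
    have hPmeas : MeasurableSet P := measurableSet_lt (hf'meas.sub measurable_const) (hF'meas n)
    set C₁ := C ∩ P with hC₁def
    set C₂ := C ∩ Pᶜ with hC₂def
    have hBmeas : MeasurableSet B := hA.inter hTmeas
    have hCmeas : MeasurableSet C := hA.inter hTmeas.compl
    have hC₁meas : MeasurableSet C₁ := hCmeas.inter hPmeas
    have hC₂meas : MeasurableSet C₂ := hCmeas.inter hPmeas.compl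
    have hC₂D : C₂ ⊆ D := by
      intro x hx
      have h9 : ¬ (f' x - γ < F' n x) := hx.2
      exact not_lt.1 h9
    have hsplit1 : ∫ s in A, F' n s ∂μs n =
        (∫ s in B, F' n s ∂μs n) + ((∫ s in C₁, F' n s ∂μs n) + ∫ s in C₂, F' n s ∂μs n) := by
      have e1 : B ∪ C = A := Set.inter_union_compl A T
      have e2 : C₁ ∪ C₂ = C := Set.inter_union_compl C P
      have d1 : Disjoint B C := Set.disjoint_left.2 fun x hx hx' => hx'.2 hx.2
      have d2 : Disjoint C₁ C₂ := Set.disjoint_left.2 fun x hx hx' => hx'.2 hx.2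
      rw [← e1, setIntegral_union d1 hCmeas ((hF'int n).integrableOn) ((hF'int n).integrableOn),
        ← e2, setIntegral_union d2 hC₂meas ((hF'int n).integrableOn) ((hF'int n).integrableOn)]
    -- E1
    have hTB : ∫ s in T, F' n s ∂μs n ≤ ∫ s in B, F' n s ∂μs n := by
      have e : B ∪ (T \ A) = T := by
        ext x
        simp only [hBdef, Set.mem_union, Set.mem_inter_iff, Set.mem_diff]
        tauto
      have d : Disjoint B (T \ A) := Set.disjoint_left.2 fun x hx hx' => hx'.2 hx.1
      rw [← e, setIntegral_union d (hTmeas.diff hA) ((hF'int n).integrableOn)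
        ((hF'int n).integrableOn)]
      have hnp : ∫ s in T \ A, F' n s ∂μs n ≤ 0 :=
        setIntegral_nonpos (hTmeas.diff hA) fun x hx => le_trans hx.1 (by linarith)
      linarith
    have hE1 : -δ ≤ ∫ s in B, F' n s ∂μs n := by
      have e3 : ∫ s in {x | F n x ≤ -K}, F n s ∂μs n = ∫ s in T, F' n s ∂μs n := by
        rw [setIntegral_congr_set (t := T) ?_]
        · exact integral_congr_ae (ae_restrict_of_ae (hFF' n))
        · filter_upwards [hFF' n] with x hx
          show (F n x ≤ -K) = (F' n x ≤ -K)
          rw [hx]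
      have h4 := hK₀ K hKK₀ n
      rw [e3] at h4
      linarith
    -- E2
    have hμsC₂ : (μs n C₂).toReal ≤ δ / K + τ := by
      refine ENNReal.toReal_le_of_le_ofReal (by positivity) ?_
      calc μs n C₂ ≤ μ C₂ + ENNReal.ofReal τ := (hcompτ C₂ hC₂meas).1
        _ ≤ μ D + ENNReal.ofReal τ := add_le_add_left (measure_mono hC₂D) _
        _ ≤ ENNReal.ofReal (δ / K) + ENNReal.ofReal τ :=
            add_le_add_left (lt_of_lt_of_le hDμ (min_le_right _ _)).le _
        _ = ENNReal.ofReal (δ / K + τ) := (ENNReal.ofReal_add (by positivity) hτ.le).symm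
    have hE2 : -(2 * δ) ≤ ∫ s in C₂, F' n s ∂μs n := by
      have hmono : ∫ s in C₂, (-K : ℝ) ∂μs n ≤ ∫ s in C₂, F' n s ∂μs n :=
        setIntegral_mono_on (integrableOn_const (measure_ne_top _ _))
          ((hF'int n).integrableOn) hC₂meas fun x hx => by
            have h9 : ¬ F' n x ≤ -K := hx.1.2
            linarith [not_le.1 h9]
      rw [setIntegral_const, smul_eq_mul] at hmono; change (μs n C₂).toReal * -K ≤ _ at hmono
      have hKδ : K * (δ / K) = δ := by field_simp
      have hKτ : K * τ = δ / 3 := by rw [hτdef]; field_simp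
      nlinarith [ENNReal.toReal_nonneg (a := μs n C₂), hμsC₂, hKpos]
    -- E3
    have hE3 : ∫ s in C₁, g s ∂μs n ≤ ∫ s in C₁, F' n s ∂μs n := by
      refine setIntegral_mono_on hgintn.integrableOn ((hF'int n).integrableOn) hC₁meas
        fun x hx => ?_
      have h9 : ¬ F' n x ≤ -K := hx.1.2
      have hx1 : -K < F' n x := not_le.1 h9
      have hx2 : f' x - γ < F' n x := hx.2
      refine max_le ?_ hx1.le
      have := min_le_left (f' x) K
      linarith
    -- E4
    have hE4 : (∫ s in C₁, g s ∂μ) - δ ≤ ∫ s in C₁, g s ∂μs n := by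
      have hB := uf_lemB hτ.le (fun A hA => (hcompτ A hA).2) (fun A hA => (hcompτ A hA).1)
        hgmeas hKpos.le hgbd hC₁meas
      have h3 : 3 * K * τ = δ := by rw [hτdef]; field_simp
      linarith
    -- E5a
    have hmax_int : Integrable (fun x => max (f' x - K) 0) μ :=
      (hf'int.sub (integrable_const K)).pos_part
    have hptwise : ∀ x, f' x ≤ g x + (γ + max (f' x - K) 0) := by
      intro x
      have hg1 : min (f' x) K - γ ≤ g x := le_max_left _ _
      rcases le_total (f' x) K with h | h
      · have e : min (f' x) K = f' x := min_eq_left h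
        have h0 : (0:ℝ) ≤ max (f' x - K) 0 := le_max_right _ _
        rw [e] at hg1; linarith
      · have e : min (f' x) K = K := min_eq_right h
        have h0 : f' x - K ≤ max (f' x - K) 0 := le_max_left _ _
        rw [e] at hg1; linarith
    have hE5a1 : ∫ s in C₁, f' s ∂μ ≤ ∫ s in C₁, (g s + (γ + max (f' s - K) 0)) ∂μ :=
      setIntegral_mono_on hf'int.integrableOn
        ((hgintμ.add ((integrable_const γ).add hmax_int)).integrableOn) hC₁meas
        fun x _ => hptwise x
    have hsplitint : ∫ s in C₁, (g s + (γ + max (f' s - K) 0)) ∂μ =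
        (∫ s in C₁, g s ∂μ) + ((μ C₁).toReal * γ + ∫ s in C₁, max (f' s - K) 0 ∂μ) := by
      have e1 : ∫ s in C₁, (g s + (γ + max (f' s - K) 0)) ∂μ =
          (∫ s in C₁, g s ∂μ) + ∫ s in C₁, (γ + max (f' s - K) 0) ∂μ :=
        integral_add hgintμ.integrableOn ((integrable_const γ).add hmax_int).integrableOn
      have e2 : ∫ s in C₁, (γ + max (f' s - K) 0) ∂μ =
          (∫ s in C₁, (γ:ℝ) ∂μ) + ∫ s in C₁, max (f' s - K) 0 ∂μ :=
        integral_add (integrable_const γ).integrableOn hmax_int.integrableOn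
      have e3' : ∫ s in C₁, (γ:ℝ) ∂μ = (μ C₁).toReal * γ := by
        rw [setIntegral_const, smul_eq_mul]; rfl
      rw [e1, e2, e3']
    have hμC₁γ : (μ C₁).toReal * γ ≤ δ := by
      have hle : (μ C₁).toReal ≤ M :=
        ENNReal.toReal_mono (measure_ne_top _ _) (measure_mono (Set.subset_univ _))
      nlinarith [ENNReal.toReal_nonneg (a := μ C₁)]
    have hGmeas : MeasurableSet {x | K ≤ |f' x|} := measurableSet_le measurable_const hf'meas.abs
    have hGsmall : μ {x | K ≤ |f' x|} < δ' :=
      lt_of_le_of_lt (measure_mono fun x hx => le_trans hKj hx) hj₁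
    have htailint : ∫ s in C₁, max (f' s - K) 0 ∂μ ≤ δ := by
      calc ∫ s in C₁, max (f' s - K) 0 ∂μ ≤ ∫ s, max (f' s - K) 0 ∂μ :=
            setIntegral_le_integral hmax_int (ae_of_all _ fun x => le_max_right _ _)
        _ = (∫ s in {x | K ≤ |f' x|}, max (f' s - K) 0 ∂μ) +
            ∫ s in {x | K ≤ |f' x|}ᶜ, max (f' s - K) 0 ∂μ :=
            (integral_add_compl hGmeas hmax_int).symm
        _ ≤ (∫ s in {x | K ≤ |f' x|}, |f' s| ∂μ) + 0 := by
            refine add_le_add ?_ ?_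
            · refine setIntegral_mono_on hmax_int.integrableOn hf'int.abs.integrableOn hGmeas
                fun x _ => max_le (by cases' abs_cases (f' x) with h h <;> nlinarith) (abs_nonneg _)
            · have hzero : Set.EqOn (fun x => max (f' x - K) 0) (fun _ => (0:ℝ))
                  {x | K ≤ |f' x|}ᶜ := by
                intro x hx
                have h5 : |f' x| < K := not_le.1 hx
                have h6 := (abs_lt.1 h5).2
                exact max_eq_right (by linarith)
              rw [setIntegral_congr_fun hGmeas.compl hzero]
              simp
        _ ≤ δ + 0 := add_le_add (habs _ hGsmall) le_rfl
        _ = δ := add_zero _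
    have hE5a : ∫ s in C₁, f' s ∂μ ≤ (∫ s in C₁, g s ∂μ) + 2 * δ := by
      rw [hsplitint] at hE5a1
      linarith
    -- E5b
    have hACmeas : MeasurableSet (A \ C₁) := hA.diff hC₁meas
    have hACsub : (A \ C₁) ∩ {x | 0 < f' x} ⊆ D := by
      rintro x ⟨⟨hxA, hxnC⟩, hxf⟩
      by_cases hxT : x ∈ T
      · show F' n x ≤ f' x - γ
        have h7 : F' n x ≤ -K := hxT
        have h8 : 0 < f' x := hxf
        linarith
      · have hxP : x ∉ P := fun hP => hxnC ⟨⟨hxA, hxT⟩, hP⟩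
        have h9 : ¬ (f' x - γ < F' n x) := hxP
        exact not_lt.1 h9
    have hpos_int : Integrable (fun x => max (f' x) 0) μ := hf'int.pos_part
    have hposmeas : MeasurableSet {x | 0 < f' x} := measurableSet_lt measurable_const hf'meas
    have hE5b : ∫ s in A \ C₁, f' s ∂μ ≤ δ := by
      calc ∫ s in A \ C₁, f' s ∂μ ≤ ∫ s in A \ C₁, max (f' s) 0 ∂μ :=
            setIntegral_mono_on hf'int.integrableOn hpos_int.integrableOn hACmeas
              fun x _ => le_max_left _ _
        _ = ∫ s in A \ C₁, Set.indicator {x | 0 < f' x} (fun s => max (f' s) 0) s ∂μ := by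
            refine setIntegral_congr_fun hACmeas fun x _ => ?_
            by_cases h8 : 0 < f' x
            · exact (Set.indicator_of_mem (show x ∈ {x | 0 < f' x} from h8) (fun s => max (f' s) 0)).symm
            · rw [Set.indicator_of_notMem (show x ∉ {x | 0 < f' x} from h8)]
              exact max_eq_right (not_lt.1 h8)
        _ = ∫ s in (A \ C₁) ∩ {x | 0 < f' x}, max (f' s) 0 ∂μ := setIntegral_indicator hposmeas
        _ ≤ ∫ s in D, max (f' s) 0 ∂μ :=
            setIntegral_mono_set hpos_int.integrableOn
              (ae_of_all _ fun x => le_max_right _ _) (HasSubset.Subset.eventuallyLE hACsub)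
        _ ≤ ∫ s in D, |f' s| ∂μ :=
            setIntegral_mono_on hpos_int.integrableOn hf'int.abs.integrableOn hDmeas
              fun x _ => max_le (le_abs_self _) (abs_nonneg _)
        _ ≤ δ := habs _ hDδ'
    have hC₁A : C₁ ⊆ A := fun x hx => hx.1.1
    have hsplitA : ∫ s in A, f' s ∂μ = (∫ s in C₁, f' s ∂μ) + ∫ s in A \ C₁, f' s ∂μ := by
      have e : C₁ ∪ (A \ C₁) = A := Set.union_diff_cancel hC₁A
      conv_lhs => rw [← e]
      rw [setIntegral_union Set.disjoint_sdiff_right hACmeas hf'int.integrableOn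
        hf'int.integrableOn]
    rw [hsplit1, hsplitA]
    have : δ = ε / 10 := hδdef
    linarith
  refine le_ciInf fun A => ?_
  by_cases hA : MeasurableSet A
  · rw [ciInf_pos hA]
    exact main A hA
  · haveI : IsEmpty (MeasurableSet A) := ⟨hA⟩
    rw [Real.iInf_of_isEmpty]
    linarith
end

section
/- Let $(S,\Sigma)$ be a measurable space, $\{\mu^{(n)}\}$ finite measures converging in total variation to $\mu$, $f^{(n)} \in L^1(S;\mu^{(n)})$ nonnegative functions, and $f \in L^1(S;\mu)$. Then $\liminf_{n\to\infty}\inf_{A\in\Sigma}(\int_A f^{(n)}\,d\mu^{(n)} - \int_A f\,d\mu) \ge 0$ if and only if for each $\varepsilon>0$, $\mu(\{s: f^{(n)}(s) \le f(s)-\varepsilon\}) \to 0$ as $n\to\infty$. -/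
open MeasureTheory Filter Topology Set
open scoped ENNReal NNReal

lemma UF.lint_compare {S : Type*} [MeasurableSpace S] (ν₁ ν₂ : Measure S) {g : S → ℝ}
    (hg : Measurable g) {M : ℝ} (h0 : ∀ s, 0 ≤ g s) (hgM : ∀ s, g s ≤ M) {d : ℝ≥0∞}
    (hd : ∀ A, MeasurableSet A → ν₁ A ≤ ν₂ A + d) :
    ∫⁻ s, ENNReal.ofReal (g s) ∂ν₁ ≤ ∫⁻ s, ENNReal.ofReal (g s) ∂ν₂ + ENNReal.ofReal M * d := by
  rw [lintegral_eq_lintegral_meas_lt ν₁ (ae_of_all _ h0) hg.aemeasurable,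
      lintegral_eq_lintegral_meas_lt ν₂ (ae_of_all _ h0) hg.aemeasurable]
  have key : ∀ t ∈ Ioi (0:ℝ), ν₁ {a | t < g a} ≤
      ((fun t => ν₂ {a | t < g a}) + (Ioc (0:ℝ) M).indicator fun _ => d) t := by
    intro t ht
    by_cases hi : t ≤ M
    · have : (Ioc (0:ℝ) M).indicator (fun _ => d) t = d := by
        rw [indicator_of_mem (mem_Ioc.mpr ⟨ht, hi⟩)]
      simpa [this] using hd _ (measurableSet_lt measurable_const hg)
    · have he : {a | t < g a} = ∅ := by
        ext a; simp only [mem_setOf_eq, mem_empty_iff_false, iff_false, not_lt]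
        exact (hgM a).trans (le_of_not_ge hi)
      simp [he]
  have hmind : Measurable ((Ioc (0:ℝ) M).indicator fun _ => d) :=
    measurable_const.indicator measurableSet_Ioc
  calc ∫⁻ t in Ioi 0, ν₁ {a | t < g a}
      ≤ ∫⁻ t in Ioi 0, ((fun t => ν₂ {a | t < g a}) + (Ioc (0:ℝ) M).indicator fun _ => d) t :=
        setLIntegral_mono_ae' measurableSet_Ioi (ae_of_all _ key)
    _ = (∫⁻ t in Ioi 0, ν₂ {a | t < g a}) + ∫⁻ t in Ioi 0, (Ioc (0:ℝ) M).indicator (fun _ => d) t :=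
        lintegral_add_right _ hmind
    _ ≤ (∫⁻ t in Ioi 0, ν₂ {a | t < g a}) + ENNReal.ofReal M * d := by
        gcongr
        rw [lintegral_indicator_const measurableSet_Ioc,
          Measure.restrict_apply measurableSet_Ioc]
        have : Ioc (0:ℝ) M ∩ Ioi 0 = Ioc 0 M := by
          rw [inter_eq_left]; exact Ioc_subset_Ioi_self
        rw [this, Real.volume_Ioc]
        rw [mul_comm]
        gcongr
        simp

lemma UF.int_compare {S : Type*} [MeasurableSpace S] (ν₁ ν₂ : Measure S) [IsFiniteMeasure ν₁]
    [IsFiniteMeasure ν₂] {g : S → ℝ} (hg : Measurable g) {M : ℝ} (hM : 0 ≤ M)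
    (h0 : ∀ s, 0 ≤ g s) (hgM : ∀ s, g s ≤ M) {d : ℝ≥0∞} (hdfin : d ≠ ∞)
    (hd : ∀ A, MeasurableSet A → ν₁ A ≤ ν₂ A + d) :
    ∫ s, g s ∂ν₁ ≤ ∫ s, g s ∂ν₂ + M * d.toReal := by
  have key := UF.lint_compare ν₁ ν₂ hg h0 hgM hd
  have h2fin : ∫⁻ s, ENNReal.ofReal (g s) ∂ν₂ ≠ ∞ := by
    have hle : ∫⁻ s, ENNReal.ofReal (g s) ∂ν₂ ≤ ENNReal.ofReal M * ν₂ univ :=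
      (lintegral_mono fun s => ENNReal.ofReal_le_ofReal (hgM s)).trans_eq (lintegral_const _)
    exact ne_top_of_le_ne_top (ENNReal.mul_ne_top ENNReal.ofReal_ne_top (measure_ne_top _ _)) hle
  have hMd : ENNReal.ofReal M * d ≠ ∞ := ENNReal.mul_ne_top ENNReal.ofReal_ne_top hdfin
  rw [integral_eq_lintegral_of_nonneg_ae (ae_of_all _ h0) hg.aestronglyMeasurable,
      integral_eq_lintegral_of_nonneg_ae (ae_of_all _ h0) hg.aestronglyMeasurable]
  have h3 := ENNReal.toReal_mono (by exact ENNReal.add_ne_top.mpr ⟨h2fin, hMd⟩) key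
  rwa [ENNReal.toReal_add h2fin hMd, ENNReal.toReal_mul, ENNReal.toReal_ofReal hM] at h3

lemma UF.main {S : Type*} [MeasurableSpace S]
    (μs : ℕ → Measure S) (μ : Measure S) [∀ n, IsFiniteMeasure (μs n)] [IsFiniteMeasure μ]
    (htv : Tendsto (fun n => ⨆ (A : Set S) (_ : MeasurableSet A),
      (μs n A - μ A) + (μ A - μs n A)) atTop (𝓝 0))
    (f : S → ℝ) (F : ℕ → S → ℝ) (hfm : Measurable f) (hFm : ∀ n, Measurable (F n))
    (hf : Integrable f μ) (hF : ∀ n, Integrable (F n) (μs n))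
    (hpos : ∀ n s, 0 ≤ F n s) :
    (∀ ε : ℝ, 0 < ε → ∀ᶠ n in atTop,
      -ε ≤ ⨅ (A : Set S) (_ : MeasurableSet A),
        (∫ s in A, F n s ∂(μs n) - ∫ s in A, f s ∂μ)) ↔
    (∀ ε : ℝ, 0 < ε →
      Tendsto (fun n => μ {s | F n s ≤ f s - ε}) atTop (𝓝 0)) := by
  set d : ℕ → ℝ≥0∞ := fun n => ⨆ (A : Set S) (_ : MeasurableSet A),
      (μs n A - μ A) + (μ A - μs n A) with hd_def
  have hd1 : ∀ n A, MeasurableSet A → μs n A ≤ μ A + d n := by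
    intro n A hA
    calc μs n A ≤ μ A + (μs n A - μ A) := le_add_tsub
      _ ≤ μ A + ((μs n A - μ A) + (μ A - μs n A)) := add_le_add_right (self_le_add_right _ _) _
      _ ≤ μ A + d n := add_le_add_right
          (le_iSup₂ (f := fun A (_ : MeasurableSet A) => (μs n A - μ A) + (μ A - μs n A)) A hA) _
  have hd2 : ∀ n A, MeasurableSet A → μ A ≤ μs n A + d n := by
    intro n A hA
    calc μ A ≤ μs n A + (μ A - μs n A) := le_add_tsub
      _ ≤ μs n A + ((μs n A - μ A) + (μ A - μs n A)) := add_le_add_right (self_le_add_left _ _) _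
      _ ≤ μs n A + d n := add_le_add_right
          (le_iSup₂ (f := fun A (_ : MeasurableSet A) => (μs n A - μ A) + (μ A - μs n A)) A hA) _
  have hdsmall : ∀ c : ℝ, 0 < c → ∀ᶠ n in atTop, d n ≤ ENNReal.ofReal c := by
    intro c hc
    exact (htv.eventually_lt_const (ENNReal.ofReal_pos.mpr hc)).mono fun n hn => hn.le
  -- tail of f
  have tailM : Tendsto (fun m : ℕ => μ {s | (m:ℝ) < ‖f s‖}) atTop (𝓝 0) := by
    have hmeas : ∀ m : ℕ, MeasurableSet {s | (m:ℝ) < ‖f s‖} := fun m =>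
      measurableSet_lt measurable_const hfm.norm
    have hanti : Antitone fun m : ℕ => {s | (m:ℝ) < ‖f s‖} := by
      intro i j hij s hs
      have hs' : (j:ℝ) < ‖f s‖ := hs
      exact lt_of_le_of_lt (Nat.cast_le.mpr hij) hs' 
    have hempty : (⋂ m : ℕ, {s | (m:ℝ) < ‖f s‖}) = ∅ := by
      ext s
      simp only [mem_iInter, mem_setOf_eq, mem_empty_iff_false, iff_false, not_forall, not_lt]
      obtain ⟨m, hm⟩ := exists_nat_ge ‖f s‖
      exact ⟨m, hm⟩
    have h := tendsto_measure_iInter_atTop (μ := μ) (s := fun m : ℕ => {s | (m:ℝ) < ‖f s‖})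
      (fun m => (hmeas m).nullMeasurableSet) hanti
      ⟨0, measure_ne_top _ _⟩
    rw [hempty] at h
    simpa [Function.comp_def] using h
  -- lower bound for the infimum family
  have hbdd : ∀ n, BddBelow (range fun B : Set S =>
      ⨅ _ : MeasurableSet B, (∫ s in B, F n s ∂(μs n) - ∫ s in B, f s ∂μ)) := by
    intro n
    refine ⟨-(∫ s, ‖f s‖ ∂μ), ?_⟩
    rintro x ⟨B, rfl⟩
    dsimp only
    by_cases hB : MeasurableSet B
    · rw [ciInf_pos hB]
      have h1 : 0 ≤ ∫ s in B, F n s ∂(μs n) := setIntegral_nonneg hB fun s _ => hpos n s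
      have h2 : ∫ s in B, f s ∂μ ≤ ∫ s, ‖f s‖ ∂μ := by
        calc ∫ s in B, f s ∂μ ≤ ∫ s in B, ‖f s‖ ∂μ :=
              setIntegral_mono_on hf.integrableOn hf.norm.integrableOn hB
                (fun s _ => (Real.norm_eq_abs (f s)) ▸ le_abs_self (f s))
          _ ≤ ∫ s, ‖f s‖ ∂μ :=
              setIntegral_le_integral hf.norm (ae_of_all _ fun s => norm_nonneg _)
      linarith
    · haveI : IsEmpty (MeasurableSet B) := ⟨hB⟩
      rw [Real.iInf_of_isEmpty]
      have : 0 ≤ ∫ s, ‖f s‖ ∂μ := integral_nonneg fun s => norm_nonneg _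
      linarith
  constructor
  · -- LHS → RHS
    intro h ε hε
    rw [ENNReal.tendsto_nhds_zero]
    intro θ hθ
    obtain ⟨t, ht0, htθ⟩ : ∃ t : ℝ, 0 < t ∧ ENNReal.ofReal t ≤ θ := by
      rcases eq_or_ne θ ∞ with hθ' | hθ'
      · exact ⟨1, one_pos, by simp [hθ']⟩
      · exact ⟨θ.toReal, ENNReal.toReal_pos hθ.ne' hθ', by rw [ENNReal.ofReal_toReal hθ']⟩
    obtain ⟨m₀, hm₀⟩ : ∃ m₀ : ℕ, μ {s | (m₀:ℝ) < ‖f s‖} ≤ ENNReal.ofReal (t/3) :=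
      ((tailM.eventually_lt_const (ENNReal.ofReal_pos.mpr (by linarith))).mono
        (fun m hm => hm.le)).exists
    set M : ℝ := (m₀ : ℝ) + 1 with hMdef
    have hM0 : 0 < M := by positivity
    set C : Set S := {s | M < ‖f s‖} with hCdef
    have hCmeas : MeasurableSet C := measurableSet_lt measurable_const hfm.norm
    have hCsmall : μ C ≤ ENNReal.ofReal (t/3) := by
      refine le_trans (measure_mono ?_) hm₀
      intro s hs
      have hs' : M < ‖f s‖ := hs
      show (m₀:ℝ) < ‖f s‖
      have : (m₀:ℝ) < M := lt_add_one _
      linarith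
    set η : ℝ := ε * t / 3 with hηdef
    have hη : 0 < η := by positivity
    filter_upwards [h η hη, hdsmall (η / M) (by positivity)] with n hn1 hn2
    have hdfin : d n ≠ ∞ := ne_top_of_le_ne_top ENNReal.ofReal_ne_top hn2
    have hdr : M * (d n).toReal ≤ η := by
      have := ENNReal.toReal_le_of_le_ofReal (by positivity) hn2
      calc M * (d n).toReal ≤ M * (η / M) := by
            exact mul_le_mul_of_nonneg_left this hM0.le
        _ = η := by field_simp
    set A : Set S := {s | F n s ≤ f s - ε} \ C with hAdef
    have hAm : MeasurableSet A :=
      (measurableSet_le (hFm n) (hfm.sub measurable_const)).diff hCmeas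
    have key1 : -η ≤ ∫ s in A, F n s ∂(μs n) - ∫ s in A, f s ∂μ :=
      hn1.trans ((ciInf_le (hbdd n) A).trans_eq (ciInf_pos hAm))
    set g : S → ℝ := fun s => min (F n s) M with hgdef
    have hgmeas : Measurable g := (hFm n).min measurable_const
    have hg0 : ∀ s, 0 ≤ g s := fun s => le_min (hpos n s) hM0.le
    have hgM : ∀ s, g s ≤ M := fun s => min_le_right _ _
    have hgint : ∀ (ν : Measure S) [IsFiniteMeasure ν] (B : Set S), IntegrableOn g B ν := by
      intro ν _ B
      refine Integrable.mono' (integrable_const M) hgmeas.aestronglyMeasurable ?_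
      exact ae_of_all _ fun s => abs_le.mpr ⟨by linarith [hg0 s], hgM s⟩
    have step2 : ∫ s in A, F n s ∂(μs n) = ∫ s in A, g s ∂(μs n) := by
      refine setIntegral_congr_fun hAm fun s hs => ?_
      obtain ⟨hs1, hs2⟩ := hs
      have hfM : ‖f s‖ ≤ M := not_lt.mp hs2
      have hFle : F n s ≤ M := by
        have : f s ≤ ‖f s‖ := (Real.norm_eq_abs (f s)) ▸ le_abs_self (f s)
        have hs1' : F n s ≤ f s - ε := hs1
        linarith
      exact (min_eq_left hFle).symm
    have step3 : ∫ s in A, g s ∂(μs n) ≤ ∫ s in A, g s ∂μ + M * (d n).toReal := by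
      refine UF.int_compare ((μs n).restrict A) (μ.restrict A) hgmeas hM0.le hg0 hgM hdfin ?_
      intro B hB
      rw [Measure.restrict_apply hB, Measure.restrict_apply hB]
      exact hd1 n _ (hB.inter hAm)
    have step4 : ∫ s in A, g s ∂μ + ε * (μ A).toReal ≤ ∫ s in A, f s ∂μ := by
      have hmono : ∫ s in A, (g s + ε) ∂μ ≤ ∫ s in A, f s ∂μ := by
        refine setIntegral_mono_on ((hgint μ A).add (integrable_const ε)) hf.integrableOn hAm ?_
        intro s hs
        obtain ⟨hs1, _⟩ := hs
        have hs1' : F n s ≤ f s - ε := hs1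
        have : g s ≤ F n s := min_le_left _ _
        linarith
      rw [integral_add (hgint μ A) (integrable_const ε), setIntegral_const,
        smul_eq_mul, measureReal_def] at hmono
      linarith [hmono]
    have hμA : (μ A).toReal ≤ 2 * t / 3 := by
      have hx : ε * (μ A).toReal ≤ ε * (2 * t / 3) := by
        have h1 : ε * (μ A).toReal ≤ η + M * (d n).toReal := by linarith
        have h2 : η = ε * t / 3 := hηdef
        linarith
      exact le_of_mul_le_mul_left hx hε
    calc μ {s | F n s ≤ f s - ε} ≤ μ (A ∪ C) := by
          refine measure_mono fun s hs => ?_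
          by_cases hsC : s ∈ C
          · exact Or.inr hsC
          · exact Or.inl ⟨hs, hsC⟩
      _ ≤ μ A + μ C := measure_union_le _ _
      _ ≤ ENNReal.ofReal (2 * t / 3) + ENNReal.ofReal (t / 3) := by
          refine add_le_add ?_ hCsmall
          rw [← ENNReal.ofReal_toReal (measure_ne_top μ A)]
          exact ENNReal.ofReal_le_ofReal hμA
      _ = ENNReal.ofReal t := by
          rw [← ENNReal.ofReal_add (by linarith) (by linarith)]
          congr 1
          ring
      _ ≤ θ := htθ
  · -- RHS → LHS
    intro h ε hε
    -- choose M, a tail bound for ∫ ‖f‖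
    have tailI : Tendsto (fun m : ℕ => ∫ s in {s | (m:ℝ) < ‖f s‖}, ‖f s‖ ∂μ) atTop (𝓝 0) :=
      hf.norm.tendsto_setIntegral_nhds_zero tailM
    obtain ⟨m₀, hm₀⟩ : ∃ m₀ : ℕ, ∫ s in {s | (m₀:ℝ) < ‖f s‖}, ‖f s‖ ∂μ ≤ ε / 4 := by
      have := tailI.eventually_lt_const (show (0:ℝ) < ε / 4 by positivity)
      exact (this.mono fun m hm => hm.le).exists
    set M : ℝ := (m₀ : ℝ) + 1 with hMdef
    have hM0 : 0 < M := by positivity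
    set C : Set S := {s | M < ‖f s‖} with hCdef
    have hCmeas : MeasurableSet C := measurableSet_lt measurable_const hfm.norm
    have hCsub : C ⊆ {s | (m₀:ℝ) < ‖f s‖} := by
      intro s hs
      have hs' : M < ‖f s‖ := hs
      show (m₀:ℝ) < ‖f s‖
      have : (m₀:ℝ) < M := lt_add_one _
      linarith
    have hCsmall : ∫ s in C, ‖f s‖ ∂μ ≤ ε / 4 := by
      refine le_trans ?_ hm₀
      exact setIntegral_mono_set hf.norm.integrableOn
        (ae_of_all _ fun s => norm_nonneg _) (ae_of_all _ hCsub)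
    set δ : ℝ := ε / (4 * ((μ univ).toReal + 1)) with hδdef
    have hμu : 0 ≤ (μ univ).toReal := ENNReal.toReal_nonneg
    have hδ : 0 < δ := by positivity
    have hδμ : δ * (μ univ).toReal ≤ ε / 4 := by
      rw [hδdef]
      rw [div_mul_eq_mul_div, div_le_div_iff₀ (by positivity) (by norm_num)]
      nlinarith
    set B : ℕ → Set S := fun n => {s | F n s ≤ f s - δ} with hBdef
    have hBmeas : ∀ n, MeasurableSet (B n) := fun n =>
      measurableSet_le (hFm n) (hfm.sub measurable_const)
    have hBten : Tendsto (fun n => μ (B n)) atTop (𝓝 0) := h δ hδ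
    have hBint : Tendsto (fun n => ∫ s in B n, ‖f s‖ ∂μ) atTop (𝓝 0) :=
      hf.norm.tendsto_setIntegral_nhds_zero hBten
    have hBev : ∀ᶠ n in atTop, ∫ s in B n, ‖f s‖ ∂μ ≤ ε / 4 :=
      (hBint.eventually_lt_const (show (0:ℝ) < ε / 4 by positivity)).mono fun n hn => hn.le
    filter_upwards [hBev, hdsmall (ε / (4 * M)) (by positivity)] with n hn1 hn2
    have hdfin : d n ≠ ∞ := ne_top_of_le_ne_top ENNReal.ofReal_ne_top hn2
    have hdr : M * (d n).toReal ≤ ε / 4 := by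
      have := ENNReal.toReal_le_of_le_ofReal (by positivity) hn2
      calc M * (d n).toReal ≤ M * (ε / (4 * M)) := mul_le_mul_of_nonneg_left this hM0.le
        _ = ε / 4 := by field_simp
    -- prove the infimum bound
    refine le_ciInf fun A => ?_
    by_cases hA : MeasurableSet A
    · rw [ciInf_pos hA]
      -- goal : -ε ≤ ∫ s in A, F n s ∂μs n - ∫ s in A, f s ∂μ
      set g : S → ℝ := fun s => min (F n s) M with hgdef
      have hgmeas : Measurable g := (hFm n).min measurable_const
      have hg0 : ∀ s, 0 ≤ g s := fun s => le_min (hpos n s) hM0.le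
      have hgM : ∀ s, g s ≤ M := fun s => min_le_right _ _
      have hgint : ∀ (ν : Measure S) [IsFiniteMeasure ν] (E : Set S), IntegrableOn g E ν := by
        intro ν _ E
        refine Integrable.mono' (integrable_const M) hgmeas.aestronglyMeasurable ?_
        exact ae_of_all _ fun s => abs_le.mpr ⟨by linarith [hg0 s], hgM s⟩
      set E : Set S := (A \ B n) \ C with hEdef
      have hEmeas : MeasurableSet E := ((hA.diff (hBmeas n)).diff hCmeas)
      have hEsubA : E ⊆ A := fun s hs => hs.1.1
      -- split ∫_A f into three pieces
      have hU1 : ((A \ B n) ∩ C) ∪ E = A \ B n := by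
        rw [hEdef, inter_union_diff]
      have hU2 : (A ∩ B n) ∪ (A \ B n) = A := inter_union_diff A (B n)
      have eq1 : ∫ s in A \ B n, f s ∂μ
          = (∫ s in (A \ B n) ∩ C, f s ∂μ) + ∫ s in E, f s ∂μ := by
        conv_lhs => rw [← hU1]
        exact setIntegral_union (disjoint_sdiff_right.mono_left inter_subset_right) hEmeas
          hf.integrableOn hf.integrableOn
      have eq2 : ∫ s in A, f s ∂μ
          = (∫ s in A ∩ B n, f s ∂μ) + ∫ s in A \ B n, f s ∂μ := by
        conv_lhs => rw [← hU2]
        exact setIntegral_union (disjoint_sdiff_right.mono_left inter_subset_right)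
          (hA.diff (hBmeas n)) hf.integrableOn hf.integrableOn
      have b1 : ∫ s in A ∩ B n, f s ∂μ ≤ ε / 4 := by
        calc ∫ s in A ∩ B n, f s ∂μ ≤ ∫ s in A ∩ B n, ‖f s‖ ∂μ :=
              setIntegral_mono_on hf.integrableOn hf.norm.integrableOn
                (hA.inter (hBmeas n)) (fun s _ => (Real.norm_eq_abs (f s)) ▸ le_abs_self (f s))
          _ ≤ ∫ s in B n, ‖f s‖ ∂μ :=
              setIntegral_mono_set hf.norm.integrableOn (ae_of_all _ fun s => norm_nonneg _)
                (HasSubset.Subset.eventuallyLE inter_subset_right)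
          _ ≤ ε / 4 := hn1
      have b2 : ∫ s in (A \ B n) ∩ C, f s ∂μ ≤ ε / 4 := by
        calc ∫ s in (A \ B n) ∩ C, f s ∂μ ≤ ∫ s in (A \ B n) ∩ C, ‖f s‖ ∂μ :=
              setIntegral_mono_on hf.integrableOn hf.norm.integrableOn
                ((hA.diff (hBmeas n)).inter hCmeas)
                (fun s _ => (Real.norm_eq_abs (f s)) ▸ le_abs_self (f s))
          _ ≤ ∫ s in C, ‖f s‖ ∂μ :=
              setIntegral_mono_set hf.norm.integrableOn (ae_of_all _ fun s => norm_nonneg _)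
                (HasSubset.Subset.eventuallyLE inter_subset_right)
          _ ≤ ε / 4 := hCsmall
      have b3 : ∫ s in E, f s ∂μ ≤ (∫ s in E, g s ∂μ) + ε / 4 := by
        have hfE : ∀ s ∈ E, f s ≤ g s + δ := by
          intro s hs
          obtain ⟨⟨hsA, hsB⟩, hsC⟩ := hs
          have h1 : f s - δ < F n s := by
            by_contra hcon
            exact hsB (le_of_not_gt hcon)
          have h2 : f s ≤ M := by
            have : ‖f s‖ ≤ M := not_lt.mp hsC
            have := (Real.norm_eq_abs (f s)) ▸ this
            exact le_trans (le_abs_self _) this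
          have : f s - δ ≤ g s := le_min h1.le (by linarith)
          linarith
        have hmono : ∫ s in E, f s ∂μ ≤ ∫ s in E, (g s + δ) ∂μ :=
          setIntegral_mono_on hf.integrableOn ((hgint μ E).add (integrable_const δ)) hEmeas hfE
        rw [integral_add (hgint μ E) (integrable_const δ), setIntegral_const, smul_eq_mul,
          measureReal_def] at hmono
        have hμE : (μ E).toReal * δ ≤ ε / 4 := by
          have hle : (μ E).toReal ≤ (μ univ).toReal :=
            ENNReal.toReal_mono (measure_ne_top _ _) (measure_mono (subset_univ _))
          calc (μ E).toReal * δ ≤ (μ univ).toReal * δ :=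
                mul_le_mul_of_nonneg_right hle hδ.le
            _ = δ * (μ univ).toReal := by ring
            _ ≤ ε / 4 := hδμ
        linarith
      have b4 : ∫ s in E, g s ∂μ ≤ (∫ s in E, g s ∂(μs n)) + M * (d n).toReal := by
        refine UF.int_compare (μ.restrict E) ((μs n).restrict E) hgmeas hM0.le hg0 hgM hdfin ?_
        intro X hX
        rw [Measure.restrict_apply hX, Measure.restrict_apply hX]
        exact hd2 n _ (hX.inter hEmeas)
      have b5 : ∫ s in E, g s ∂(μs n) ≤ ∫ s in E, F n s ∂(μs n) :=
        setIntegral_mono_on (hgint (μs n) E) (hF n).integrableOn hEmeas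
          (fun s _ => min_le_left _ _)
      have b6 : ∫ s in E, F n s ∂(μs n) ≤ ∫ s in A, F n s ∂(μs n) :=
        setIntegral_mono_set (hF n).integrableOn (ae_of_all _ fun s => hpos n s)
          (HasSubset.Subset.eventuallyLE hEsubA)
      have t1 : ∫ s in E, g s ∂μ ≤ (∫ s in E, F n s ∂(μs n)) + M * (d n).toReal := by
        linarith [b4, b5]
      have t2 : ∫ s in E, f s ∂μ ≤ (∫ s in E, g s ∂μ) + ε / 4 := b3
      have c1 : ∫ s in E, f s ∂μ ≤ (∫ s in A, F n s ∂(μs n)) + ε / 2 := by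
        calc ∫ s in E, f s ∂μ ≤ (∫ s in E, g s ∂μ) + ε / 4 := t2
          _ ≤ ((∫ s in E, F n s ∂(μs n)) + M * (d n).toReal) + ε / 4 := add_le_add_left t1 _
          _ ≤ ((∫ s in A, F n s ∂(μs n)) + ε / 4) + ε / 4 := by linarith [b6, hdr]
          _ = (∫ s in A, F n s ∂(μs n)) + ε / 2 := by ring
      have c2 : ∫ s in A, f s ∂μ ≤ (∫ s in A, F n s ∂(μs n)) + ε := by linarith [eq1, eq2, b1, b2, c1]
      linarith
    · haveI : IsEmpty (MeasurableSet A) := ⟨hA⟩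
      rw [Real.iInf_of_isEmpty]
      linarith

lemma UF.squeeze {u v w : ℕ → ℝ≥0∞} (hle : ∀ n, u n ≤ v n + w n)
    (hv : Tendsto v atTop (𝓝 0)) (hw : Tendsto w atTop (𝓝 0)) :
    Tendsto u atTop (𝓝 0) := by
  have hvw : Tendsto (fun n => v n + w n) atTop (𝓝 0) := by
    simpa using hv.add hw
  exact tendsto_of_tendsto_of_tendsto_of_le_of_le tendsto_const_nhds hvw
    (fun n => zero_le) hle

/-- Uniform Fatou's Lemma for nonnegative functions and variable measures. -/
theorem uniform_fatou_stmt6 {S : Type*} [MeasurableSpace S]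
    (μs : ℕ → Measure S) (μ : Measure S) [∀ n, IsFiniteMeasure (μs n)]
    (htv : Tendsto (fun n => ⨆ (A : Set S) (_ : MeasurableSet A),
      (μs n A - μ A) + (μ A - μs n A)) atTop (𝓝 0))
    (f : S → ℝ) (F : ℕ → S → ℝ)
    (hf : Integrable f μ) (hF : ∀ n, Integrable (F n) (μs n))
    (hpos : ∀ n s, 0 ≤ F n s) :
    (∀ ε : ℝ, 0 < ε → ∀ᶠ n in atTop,
      -ε ≤ ⨅ (A : Set S) (_ : MeasurableSet A),
        (∫ s in A, F n s ∂(μs n) - ∫ s in A, f s ∂μ)) ↔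
    (∀ ε : ℝ, 0 < ε →
      Tendsto (fun n => μ {s | F n s ≤ f s - ε}) atTop (𝓝 0)) := by
  set d : ℕ → ℝ≥0∞ := fun n => ⨆ (A : Set S) (_ : MeasurableSet A),
      (μs n A - μ A) + (μ A - μs n A) with hd_def
  have hd2 : ∀ n A, MeasurableSet A → μ A ≤ μs n A + d n := by
    intro n A hA
    calc μ A ≤ μs n A + (μ A - μs n A) := le_add_tsub
      _ ≤ μs n A + ((μs n A - μ A) + (μ A - μs n A)) := add_le_add_right (self_le_add_left _ _) _
      _ ≤ μs n A + d n := add_le_add_right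
          (le_iSup₂ (f := fun A (_ : MeasurableSet A) => (μs n A - μ A) + (μ A - μs n A)) A hA) _
  haveI hμfin : IsFiniteMeasure μ := by
    obtain ⟨n₀, hn₀⟩ := (htv.eventually_lt_const (show (0:ℝ≥0∞) < 1 by norm_num)).exists
    constructor
    calc μ univ ≤ μs n₀ univ + d n₀ := hd2 n₀ univ MeasurableSet.univ
      _ < ∞ := ENNReal.add_lt_top.mpr ⟨measure_lt_top _ _, lt_of_lt_of_le hn₀ le_top⟩
  set f' : S → ℝ := hf.1.mk f with hf'def
  have hf'm : Measurable f' := hf.1.stronglyMeasurable_mk.measurable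
  have hff' : f =ᵐ[μ] f' := hf.1.ae_eq_mk
  have hf' : Integrable f' μ := hf.congr hff'
  set F' : ℕ → S → ℝ := fun n s => max ((hF n).1.mk (F n) s) 0 with hF'def
  have hF'm : ∀ n, Measurable (F' n) := fun n =>
    ((hF n).1.stronglyMeasurable_mk.measurable).max measurable_const
  have hFF' : ∀ n, F n =ᵐ[μs n] F' n := fun n =>
    ((hF n).1.ae_eq_mk).mono fun s hs => by
      show F n s = max ((hF n).1.mk (F n) s) 0
      rw [← hs, max_eq_left (hpos n s)]
  have hF' : ∀ n, Integrable (F' n) (μs n) := fun n => (hF n).congr (hFF' n)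
  have hpos' : ∀ n s, 0 ≤ F' n s := fun n s => le_max_right _ _
  have main := UF.main μs μ htv f' F' hf'm hF'm hf' hF' hpos'
  -- transfer of the infimum side
  have hL : ∀ n, (⨅ (A : Set S) (_ : MeasurableSet A),
        (∫ s in A, F n s ∂(μs n) - ∫ s in A, f s ∂μ))
      = ⨅ (A : Set S) (_ : MeasurableSet A),
        (∫ s in A, F' n s ∂(μs n) - ∫ s in A, f' s ∂μ) := by
    intro n
    refine iInf_congr fun A => iInf_congr fun _ => ?_
    rw [integral_congr_ae (ae_restrict_of_ae (hFF' n)),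
      integral_congr_ae (ae_restrict_of_ae hff')]
  have hLiff : (∀ ε : ℝ, 0 < ε → ∀ᶠ n in atTop,
      -ε ≤ ⨅ (A : Set S) (_ : MeasurableSet A),
        (∫ s in A, F n s ∂(μs n) - ∫ s in A, f s ∂μ)) ↔
      (∀ ε : ℝ, 0 < ε → ∀ᶠ n in atTop,
      -ε ≤ ⨅ (A : Set S) (_ : MeasurableSet A),
        (∫ s in A, F' n s ∂(μs n) - ∫ s in A, f' s ∂μ)) := by
    constructor
    · intro h ε hε
      exact (h ε hε).mono fun n hn => by rw [← hL n]; exact hn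
    · intro h ε hε
      exact (h ε hε).mono fun n hn => by rw [hL n]; exact hn
  -- null sets for the a.e. modifications
  obtain ⟨Nf, hNfm, hNf0, hNfeq⟩ : ∃ N : Set S, MeasurableSet N ∧ μ N = 0 ∧
      ∀ s ∉ N, f s = f' s := by
    obtain ⟨N, hsub, hNm, hN0⟩ := exists_measurable_superset_of_null (ae_iff.mp hff')
    exact ⟨N, hNm, hN0, fun s hs => not_not.mp fun hne => hs (hsub hne)⟩
  have hNn : ∀ n, ∃ N : Set S, MeasurableSet N ∧ μ N ≤ d n ∧ ∀ s ∉ N, F n s = F' n s := by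
    intro n
    obtain ⟨N, hsub, hNm, hN0⟩ := exists_measurable_superset_of_null (ae_iff.mp (hFF' n))
    refine ⟨N, hNm, ?_, fun s hs => not_not.mp fun hne => hs (hsub hne)⟩
    calc μ N ≤ μs n N + d n := hd2 n N hNm
      _ = d n := by rw [hN0, zero_add]
  choose N hNm hNd hNeq using hNn
  have hcmp : ∀ (ε : ℝ) n, μ {s | F n s ≤ f s - ε} ≤ μ {s | F' n s ≤ f' s - ε} + d n := by
    intro ε n
    calc μ {s | F n s ≤ f s - ε} ≤ μ ({s | F' n s ≤ f' s - ε} ∪ (N n ∪ Nf)) := by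
          refine measure_mono fun s hs => ?_
          by_cases hsN : s ∈ N n ∪ Nf
          · exact Or.inr hsN
          · rw [mem_union] at hsN
            push_neg at hsN
            have h1 : F n s = F' n s := hNeq n s hsN.1
            have h2 : f s = f' s := hNfeq s hsN.2
            have hs' : F n s ≤ f s - ε := hs
            exact Or.inl (show F' n s ≤ f' s - ε by rw [← h1, ← h2]; exact hs')
      _ ≤ μ {s | F' n s ≤ f' s - ε} + μ (N n ∪ Nf) := measure_union_le _ _
      _ ≤ μ {s | F' n s ≤ f' s - ε} + (μ (N n) + μ Nf) :=
          add_le_add_right (measure_union_le _ _) _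
      _ ≤ μ {s | F' n s ≤ f' s - ε} + d n := by
          rw [hNf0, add_zero]
          exact add_le_add_right (hNd n) _
  have hcmp' : ∀ (ε : ℝ) n, μ {s | F' n s ≤ f' s - ε} ≤ μ {s | F n s ≤ f s - ε} + d n := by
    intro ε n
    calc μ {s | F' n s ≤ f' s - ε} ≤ μ ({s | F n s ≤ f s - ε} ∪ (N n ∪ Nf)) := by
          refine measure_mono fun s hs => ?_
          by_cases hsN : s ∈ N n ∪ Nf
          · exact Or.inr hsN
          · rw [mem_union] at hsN
            push_neg at hsN
            have h1 : F n s = F' n s := hNeq n s hsN.1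
            have h2 : f s = f' s := hNfeq s hsN.2
            have hs' : F' n s ≤ f' s - ε := hs
            exact Or.inl (show F n s ≤ f s - ε by rw [h1, h2]; exact hs')
      _ ≤ μ {s | F n s ≤ f s - ε} + μ (N n ∪ Nf) := measure_union_le _ _
      _ ≤ μ {s | F n s ≤ f s - ε} + (μ (N n) + μ Nf) :=
          add_le_add_right (measure_union_le _ _) _
      _ ≤ μ {s | F n s ≤ f s - ε} + d n := by
          rw [hNf0, add_zero]
          exact add_le_add_right (hNd n) _
  have hRiff : ∀ ε : ℝ, 0 < ε →
      (Tendsto (fun n => μ {s | F n s ≤ f s - ε}) atTop (𝓝 0) ↔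
       Tendsto (fun n => μ {s | F' n s ≤ f' s - ε}) atTop (𝓝 0)) := by
    intro ε _
    constructor
    · intro h
      exact UF.squeeze (hcmp' ε) h htv
    · intro h
      exact UF.squeeze (hcmp ε) h htv
  constructor
  · intro h ε hε
    exact (hRiff ε hε).mpr (main.mp (hLiff.mp h) ε hε)
  · intro h
    refine hLiff.mpr (main.mpr fun ε hε => ?_)
    exact (hRiff ε hε).mp (h ε hε)
end

section
/- Let $(S,\Sigma)$ be a measurable space, $\{\mu^{(n)}\}$ finite measures converging in total variation to $\mu$, and $\tilde{\mu}, \tilde{\mu}^{(n)}$ finite signed measures with $\tilde{\mu} \ll \mu$ and $\tilde{\mu}^{(n)} \ll \mu^{(n)}$. Then $\sup_{A\in\Sigma}|\tilde{\mu}^{(n)}(A) - \tilde{\mu}(A)| \to 0$ if and only if: (i) $\frac{d\tilde{\mu}^{(n)}}{d\mu^{(n)}} \to \frac{d\tilde{\mu}}{d\mu}$ in measure $\mu$; and (ii) $\lim_{K\to+\infty}\sup_{n\ge1}|\tilde{\mu}^{(n)}|(\{s: |\frac{d\tilde{\mu}^{(n)}}{d\mu^{(n)}}(s)| \ge K\})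 = 0$, where $|\tilde{\mu}^{(n)}|$ denotes the total variation measure of $\tilde{\mu}^{(n)}$. -/
open MeasureTheory Filter Topology Set
open scoped ENNReal NNReal

namespace UFS

variable {S : Type*} [MeasurableSpace S]

/-- total variation distance expression between two measures -/
noncomputable def tv (ν₁ ν₂ : Measure S) : ℝ≥0∞ :=
  ⨆ (A : Set S) (_ : MeasurableSet A), (ν₁ A - ν₂ A) + (ν₂ A - ν₁ A)

lemma le_tv {ν₁ ν₂ : Measure S} {A : Set S} (hA : MeasurableSet A) :
    (ν₁ A - ν₂ A) + (ν₂ A - ν₁ A) ≤ tv ν₁ ν₂ :=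
  le_iSup₂_of_le A hA le_rfl

lemma tv_comm (ν₁ ν₂ : Measure S) : tv ν₁ ν₂ = tv ν₂ ν₁ := by
  unfold tv
  congr 1; funext A; congr 1; funext hA; exact add_comm _ _

lemma measure_le_add_tv {ν₁ ν₂ : Measure S} {A : Set S} (hA : MeasurableSet A) :
    ν₁ A ≤ ν₂ A + tv ν₁ ν₂ :=
  tsub_le_iff_left.mp (le_trans le_self_add (le_tv hA))

lemma toReal_sub_le_tv {ν₁ ν₂ : Measure S} [IsFiniteMeasure ν₁] [IsFiniteMeasure ν₂] {A : Set S}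
    (hA : MeasurableSet A) (hD : tv ν₁ ν₂ ≠ ⊤) :
    (ν₁ A).toReal - (ν₂ A).toReal ≤ (tv ν₁ ν₂).toReal := by
  rcases le_total (ν₂ A) (ν₁ A) with h | h
  · rw [← ENNReal.toReal_sub_of_le h (measure_ne_top _ _)]
    exact ENNReal.toReal_mono hD (le_trans le_self_add (le_tv hA))
  · have : (ν₁ A).toReal - (ν₂ A).toReal ≤ 0 := by
      have := ENNReal.toReal_mono (measure_ne_top ν₂ A) h
      linarith
    exact this.trans ENNReal.toReal_nonneg

lemma integrable_of_bdd {ν : Measure S} [IsFiniteMeasure ν] {g : S → ℝ}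
    (hm : AEStronglyMeasurable g ν) {K : ℝ} (hb : ∀ x, |g x| ≤ K) : Integrable g ν :=
  (integrable_const K).mono' hm (ae_of_all _ (by simpa [Real.norm_eq_abs] using hb))

lemma setIntegral_rnDeriv_toReal {ν ρ : Measure S} [IsFiniteMeasure ν] [SigmaFinite ρ]
    (hac : ν ≪ ρ) (B : Set S) :
    ∫ x in B, (ν.rnDeriv ρ x).toReal ∂ρ = (ν B).toReal := by
  rw [integral_toReal ((Measure.measurable_rnDeriv ν ρ).aemeasurable.restrict)
    (ae_restrict_of_ae (Measure.rnDeriv_lt_top ν ρ)), Measure.setLIntegral_rnDeriv hac]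

lemma abs_integral_sub_le_tv (ν₁ ν₂ : Measure S) [IsFiniteMeasure ν₁] [IsFiniteMeasure ν₂]
    {g : S → ℝ} (hg : Measurable g) {K : ℝ} (hK : 0 ≤ K) (hb : ∀ x, |g x| ≤ K)
    (hD : tv ν₁ ν₂ ≠ ⊤) :
    |∫ x, g x ∂ν₁ - ∫ x, g x ∂ν₂| ≤ 2 * K * (tv ν₁ ν₂).toReal := by
  set ρ := ν₁ + ν₂ with hρ
  have hac₁ : ν₁ ≪ ρ := Measure.absolutelyContinuous_of_le (Measure.le_add_right le_rfl)
  have hac₂ : ν₂ ≪ ρ := Measure.absolutelyContinuous_of_le (Measure.le_add_left le_rfl)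
  set h₁ : S → ℝ := fun x => (ν₁.rnDeriv ρ x).toReal with hh₁
  set h₂ : S → ℝ := fun x => (ν₂.rnDeriv ρ x).toReal with hh₂
  have h₁m : Measurable h₁ := (Measure.measurable_rnDeriv ν₁ ρ).ennreal_toReal
  have h₂m : Measurable h₂ := (Measure.measurable_rnDeriv ν₂ ρ).ennreal_toReal
  have h₁i : Integrable h₁ ρ :=
    integrable_toReal_of_lintegral_ne_top (Measure.measurable_rnDeriv ν₁ ρ).aemeasurable
      (by rw [Measure.lintegral_rnDeriv hac₁]; exact measure_ne_top _ _)
  have h₂i : Integrable h₂ ρ :=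
    integrable_toReal_of_lintegral_ne_top (Measure.measurable_rnDeriv ν₂ ρ).aemeasurable
      (by rw [Measure.lintegral_rnDeriv hac₂]; exact measure_ne_top _ _)
  have hgint : ∀ ν : Measure S, IsFiniteMeasure ν → Integrable g ν := by
    intro ν hν
    exact @integrable_of_bdd S _ ν hν g hg.aestronglyMeasurable K hb
  have e₁ : ∫ x, g x ∂ν₁ = ∫ x, h₁ x * g x ∂ρ := by
    rw [← integral_rnDeriv_smul hac₁]; simp [hh₁, smul_eq_mul]
  have e₂ : ∫ x, g x ∂ν₂ = ∫ x, h₂ x * g x ∂ρ := by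
    rw [← integral_rnDeriv_smul hac₂]; simp [hh₂, smul_eq_mul]
  have hgi1 : Integrable (fun x => h₁ x * g x) ρ := by
    have := (integrable_rnDeriv_smul_iff hac₁).mpr (hgint ν₁ inferInstance)
    simpa [hh₁, smul_eq_mul] using this
  have hgi2 : Integrable (fun x => h₂ x * g x) ρ := by
    have := (integrable_rnDeriv_smul_iff hac₂).mpr (hgint ν₂ inferInstance)
    simpa [hh₂, smul_eq_mul] using this
  -- the set where h₁ > h₂
  set A := {x | h₂ x < h₁ x} with hAdef
  have hA : MeasurableSet A := measurableSet_lt h₂m h₁m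
  have hdi : Integrable (fun x => h₁ x - h₂ x) ρ := h₁i.sub h₂i
  have split : ∫ x, |h₁ x - h₂ x| ∂ρ
      = ∫ x in A, (h₁ x - h₂ x) ∂ρ + ∫ x in Aᶜ, (h₂ x - h₁ x) ∂ρ := by
    rw [← integral_add_compl hA hdi.abs]
    congr 1
    · exact setIntegral_congr_fun hA (fun x hx => abs_of_pos (sub_pos.2 hx))
    · refine setIntegral_congr_fun hA.compl (fun x hx => ?_)
      rw [abs_sub_comm]
      exact abs_of_nonneg (sub_nonneg.2 (not_lt.1 hx))
  have hsub1 : ∫ x in A, (h₁ x - h₂ x) ∂ρ ≤ (tv ν₁ ν₂).toReal := by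
    rw [integral_sub h₁i.integrableOn h₂i.integrableOn, setIntegral_rnDeriv_toReal hac₁ A, setIntegral_rnDeriv_toReal hac₂ A]
    exact toReal_sub_le_tv hA hD
  have hsub2 : ∫ x in Aᶜ, (h₂ x - h₁ x) ∂ρ ≤ (tv ν₁ ν₂).toReal := by
    rw [integral_sub h₂i.integrableOn h₁i.integrableOn, setIntegral_rnDeriv_toReal hac₂ _,
      setIntegral_rnDeriv_toReal hac₁ _]
    rw [tv_comm]
    exact toReal_sub_le_tv hA.compl (by rw [tv_comm]; exact hD)
  have key : ∫ x, |h₁ x - h₂ x| ∂ρ ≤ 2 * (tv ν₁ ν₂).toReal := by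
    rw [split]; linarith
  calc |∫ x, g x ∂ν₁ - ∫ x, g x ∂ν₂|
      = |∫ x, (h₁ x - h₂ x) * g x ∂ρ| := by
        rw [e₁, e₂, ← integral_sub hgi1 hgi2]
        congr 1; apply integral_congr_ae; filter_upwards with x; ring
    _ ≤ ∫ x, |h₁ x - h₂ x| * |g x| ∂ρ := by
        simpa [Real.norm_eq_abs, abs_mul] using
          norm_integral_le_integral_norm (μ := ρ) (fun x => (h₁ x - h₂ x) * g x)
    _ ≤ ∫ x, |h₁ x - h₂ x| * K ∂ρ := by
        refine integral_mono_of_nonneg (ae_of_all _ fun x => mul_nonneg (abs_nonneg _) (abs_nonneg _))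
          (hdi.abs.mul_const K) (ae_of_all _ fun x => ?_)
        show |h₁ x - h₂ x| * |g x| ≤ |h₁ x - h₂ x| * K
        exact mul_le_mul_of_nonneg_left (hb x) (abs_nonneg _)
    _ = (∫ x, |h₁ x - h₂ x| ∂ρ) * K := integral_mul_const K _
    _ ≤ 2 * (tv ν₁ ν₂).toReal * K := mul_le_mul_of_nonneg_right key hK
    _ = 2 * K * (tv ν₁ ν₂).toReal := by ring




/-! ### clamp -/

noncomputable def clamp (K a : ℝ) : ℝ := max (-K) (min a K)

lemma abs_clamp_le {K : ℝ} (hK : 0 ≤ K) (a : ℝ) : |clamp K a| ≤ K := by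
  rw [abs_le]
  constructor
  · exact le_max_left _ _
  · exact max_le (by linarith) (min_le_right _ _)

lemma clamp_eq {K a : ℝ} (h : |a| ≤ K) : clamp K a = a := by
  rw [abs_le] at h
  rw [clamp, min_eq_left h.2, max_eq_right h.1]

lemma abs_clamp_sub_clamp_le {K a b : ℝ} : |clamp K a - clamp K b| ≤ |a - b| := by
  have h1 : |clamp K a - clamp K b| ≤ |min a K - min b K| := by
    rw [clamp, clamp, max_comm (-K) _, max_comm (-K) _]
    exact abs_max_sub_max_le_abs _ _ _
  refine h1.trans ?_
  have h2 := abs_min_sub_min_le_max a K b K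
  simpa using h2

lemma clamp_measurable {K : ℝ} {g : S → ℝ} (hg : Measurable g) :
    Measurable (fun x => clamp K (g x)) :=
  measurable_const.max (hg.min measurable_const)


/-! ### suprema over measurable sets -/

noncomputable def msSup (v : Set S → ℝ) : ℝ := ⨆ (A : Set S) (_ : MeasurableSet A), v A

lemma msSup_le {v : Set S → ℝ} {b : ℝ} (hb : 0 ≤ b)
    (h : ∀ A : Set S, MeasurableSet A → v A ≤ b) : msSup v ≤ b :=
  Real.iSup_le (fun A => Real.iSup_le (fun hA => h A hA) hb) hb

lemma le_msSup {v : Set S → ℝ} {M : ℝ} (hM : ∀ A : Set S, MeasurableSet A → v A ≤ M)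
    {A : Set S} (hA : MeasurableSet A) : v A ≤ msSup v := by
  have hbdd : BddAbove (Set.range (fun A : Set S => ⨆ (_ : MeasurableSet A), v A)) := by
    refine ⟨max M 0, ?_⟩
    rintro x ⟨B, rfl⟩
    show (⨆ (_ : MeasurableSet B), v B) ≤ max M 0
    by_cases hB : MeasurableSet B
    · rw [ciSup_pos (f := fun _ : MeasurableSet B => v B) hB]
      exact le_max_of_le_left (hM B hB)
    · haveI : IsEmpty (MeasurableSet B) := ⟨hB⟩
      rw [Real.iSup_of_isEmpty]
      exact le_max_right _ _
  have h1 : v A = ⨆ (_ : MeasurableSet A), v A :=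
    (ciSup_pos (f := fun _ : MeasurableSet A => v A) hA).symm
  rw [h1]
  exact le_ciSup hbdd A

/-! ### vanishing tail integrals -/

lemma tendsto_tail_lintegral {ν : Measure S} {g : S → ℝ} (hg : Measurable g)
    (hfin : ∫⁻ x, (‖g x‖₊ : ℝ≥0∞) ∂ν ≠ ⊤) :
    Tendsto (fun K : ℝ => ∫⁻ x in {s : S | K ≤ |g s|}, (‖g x‖₊ : ℝ≥0∞) ∂ν) atTop (𝓝 0) := by
  set ρ := ν.withDensity (fun x => (‖g x‖₊ : ℝ≥0∞)) with hρ
  haveI : IsFiniteMeasure ρ := isFiniteMeasure_withDensity hfin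
  have hmeasset : ∀ K : ℝ, MeasurableSet {s : S | K ≤ |g s|} := fun K =>
    measurableSet_le measurable_const hg.abs
  have heq : ∀ K : ℝ, ∫⁻ x in {s : S | K ≤ |g s|}, (‖g x‖₊ : ℝ≥0∞) ∂ν = ρ {s : S | K ≤ |g s|} :=
    fun K => (withDensity_apply _ (hmeasset K)).symm
  set Cs : ℕ → Set S := fun m => {s : S | (m : ℝ) ≤ |g s|} with hCs
  have hnat : Tendsto (fun m : ℕ => ρ (Cs m)) atTop (𝓝 0) := by
    have h0 : ρ (⋂ m : ℕ, Cs m) = 0 := by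
      have he : (⋂ m : ℕ, Cs m) = ∅ := by
        ext x
        simp only [hCs, Set.mem_iInter, Set.mem_setOf_eq, Set.mem_empty_iff_false, iff_false,
          not_forall, not_le]
        obtain ⟨m, hm⟩ := exists_nat_gt |g x|
        exact ⟨m, hm⟩
      rw [he, measure_empty]
    have hanti : Antitone Cs := by
      intro i j hij x hx
      simp only [hCs, Set.mem_setOf_eq] at hx ⊢
      exact le_trans ((Nat.cast_le (α := ℝ)).mpr hij) hx
    have := tendsto_measure_iInter_atTop (μ := ρ) (s := Cs)
      (fun m => (hmeasset (m : ℝ)).nullMeasurableSet) hanti ⟨0, measure_ne_top _ _⟩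
    rw [h0] at this
    exact this
  rw [ENNReal.tendsto_nhds_zero]
  intro ε hε
  obtain ⟨m, hm⟩ := (ENNReal.tendsto_atTop_zero.mp hnat) ε hε
  refine eventually_atTop.2 ⟨(m : ℝ), fun K hK => ?_⟩
  rw [heq]
  refine le_trans (measure_mono ?_) (hm m le_rfl)
  intro x hx
  exact le_trans hK hx

/-! ### total variation of a density -/

lemma totalVariation_withDensityᵥ {μ : Measure S} {g : S → ℝ} (hgm : Measurable g)
    (hgi : Integrable g μ) :
    SignedMeasure.totalVariation (μ.withDensityᵥ g) = μ.withDensity (fun x => (‖g x‖₊ : ℝ≥0∞)) := by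
  have hnn : ∫⁻ x, (‖g x‖₊ : ℝ≥0∞) ∂μ ≠ ⊤ := hgi.2.ne
  have hfin1 : ∫⁻ x, ENNReal.ofReal (g x) ∂μ ≠ ⊤ := by
    refine ne_top_of_le_ne_top hnn (lintegral_mono fun x => ?_)
    rw [← enorm_eq_nnnorm, Real.enorm_eq_ofReal_abs]
    exact ENNReal.ofReal_le_ofReal (le_abs_self _)
  have hfin2 : ∫⁻ x, ENNReal.ofReal (-(g x)) ∂μ ≠ ⊤ := by
    refine ne_top_of_le_ne_top hnn (lintegral_mono fun x => ?_)
    rw [← enorm_eq_nnnorm, Real.enorm_eq_ofReal_abs]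
    exact ENNReal.ofReal_le_ofReal (neg_le_abs _)
  haveI i1 : IsFiniteMeasure (μ.withDensity (fun x => ENNReal.ofReal (g x))) :=
    isFiniteMeasure_withDensity hfin1
  haveI i2 : IsFiniteMeasure (μ.withDensity (fun x => ENNReal.ofReal (-(g x)))) :=
    isFiniteMeasure_withDensity hfin2
  have hu : MeasurableSet {x : S | g x ≤ 0} := measurableSet_le hgm measurable_const
  have hms : (μ.withDensity (fun x => ENNReal.ofReal (g x))) ⟂ₘ
      (μ.withDensity (fun x => ENNReal.ofReal (-(g x)))) := by
    refine ⟨{x | g x ≤ 0}, hu, ?_, ?_⟩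
    · rw [withDensity_apply _ hu, lintegral_eq_zero_iff hgm.ennreal_ofReal]
      rw [Filter.EventuallyEq, ae_restrict_iff' hu]
      exact ae_of_all _ (fun x hx => by simpa using ENNReal.ofReal_eq_zero.2 hx)
    · rw [withDensity_apply _ hu.compl, lintegral_eq_zero_iff (f := fun x => ENNReal.ofReal (-(g x))) hgm.neg.ennreal_ofReal]
      rw [Filter.EventuallyEq, ae_restrict_iff' hu.compl]
      refine ae_of_all _ (fun x hx => ?_)
      simp only [Set.mem_compl_iff, Set.mem_setOf_eq, not_le] at hx
      simpa using ENNReal.ofReal_eq_zero.2 (by linarith : -(g x) ≤ 0)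
  set J : JordanDecomposition S :=
    ⟨μ.withDensity (fun x => ENNReal.ofReal (g x)),
     μ.withDensity (fun x => ENNReal.ofReal (-(g x))), hms⟩ with hJdef
  have hJ : μ.withDensityᵥ g = J.toSignedMeasure := by
    rw [withDensityᵥ_eq_withDensity_pos_part_sub_withDensity_neg_part hgi]
    rfl
  have hJD : SignedMeasure.toJordanDecomposition (μ.withDensityᵥ g) = J := by
    rw [hJ, MeasureTheory.JordanDecomposition.toJordanDecomposition_toSignedMeasure]
  unfold SignedMeasure.totalVariation
  rw [hJD]
  show (μ.withDensity fun x => ENNReal.ofReal (g x)) +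
      (μ.withDensity fun x => ENNReal.ofReal (-(g x))) = _
  rw [← withDensity_add_left (hgm.ennreal_ofReal)]
  congr 1
  funext x
  rcases le_total 0 (g x) with h | h
  · rw [Pi.add_apply, ENNReal.ofReal_eq_zero.2 (by linarith : -(g x) ≤ 0), add_zero,
      ← enorm_eq_nnnorm, Real.enorm_eq_ofReal_abs, abs_of_nonneg h]
  · rw [Pi.add_apply, ENNReal.ofReal_eq_zero.2 h, zero_add,
      ← enorm_eq_nnnorm, Real.enorm_eq_ofReal_abs, abs_of_nonpos h]


lemma aux_lower {ν₁ ν₂ : Measure S} [IsFiniteMeasure ν₁] [IsFiniteMeasure ν₂]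
    {g₁ g₂ : S → ℝ} (hg₁ : Integrable g₁ ν₁) (hg₂m : Measurable g₂)
    {B : Set S} (hB : MeasurableSet B) {K ε : ℝ} (hK : 0 ≤ K) (hε : 0 < ε)
    (hg₂b : ∀ x ∈ B, |g₂ x| ≤ K)
    (hlow : ∀ x ∈ B, g₂ x + ε ≤ g₁ x) (hD : tv ν₁ ν₂ ≠ ⊤) :
    ε * (ν₁ B).toReal ≤
      |∫ x in B, g₁ x ∂ν₁ - ∫ x in B, g₂ x ∂ν₂| + 2 * K * (tv ν₁ ν₂).toReal := by
  set G : S → ℝ := B.indicator (fun x => clamp K (g₂ x)) with hG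
  have hGm : Measurable G := (clamp_measurable hg₂m).indicator hB
  have hGb : ∀ x, |G x| ≤ K := by
    intro x
    rw [hG]
    by_cases hx : x ∈ B
    · rw [Set.indicator_of_mem hx]; exact abs_clamp_le hK _
    · rw [Set.indicator_of_notMem hx]; simpa using hK
  have hGint : ∀ (ν : Measure S), IsFiniteMeasure ν → ∫ x, G x ∂ν = ∫ x in B, g₂ x ∂ν := by
    intro ν hν
    rw [hG, integral_indicator hB]
    exact setIntegral_congr_fun hB (fun x hx => clamp_eq (hg₂b x hx))
  have hcmp : |∫ x, G x ∂ν₁ - ∫ x, G x ∂ν₂| ≤ 2 * K * (tv ν₁ ν₂).toReal :=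
    abs_integral_sub_le_tv ν₁ ν₂ hGm hK hGb hD
  have hg₂i : IntegrableOn g₂ B ν₁ := by
    refine Integrable.mono' (integrable_const K) hg₂m.aestronglyMeasurable ?_
    rw [ae_restrict_iff' hB]
    exact ae_of_all _ (fun x hx => by simpa [Real.norm_eq_abs] using hg₂b x hx)
  have hmono : ∫ x in B, g₂ x ∂ν₁ + ε * (ν₁ B).toReal ≤ ∫ x in B, g₁ x ∂ν₁ := by
    have h1 : ∫ x in B, (g₂ x + ε) ∂ν₁ ≤ ∫ x in B, g₁ x ∂ν₁ :=
      setIntegral_mono_on (hg₂i.add (integrableOn_const (measure_ne_top _ _)))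
        hg₁.integrableOn hB hlow
    rwa [integral_add hg₂i (integrableOn_const (measure_ne_top _ _)),
      setIntegral_const, smul_eq_mul, mul_comm] at h1
  have e1 : ∫ x, G x ∂ν₁ = ∫ x in B, g₂ x ∂ν₁ := hGint ν₁ inferInstance
  have e2 : ∫ x, G x ∂ν₂ = ∫ x in B, g₂ x ∂ν₂ := hGint ν₂ inferInstance
  have habs1 : ∫ x in B, g₁ x ∂ν₁ - ∫ x in B, g₂ x ∂ν₂ ≤
      |∫ x in B, g₁ x ∂ν₁ - ∫ x in B, g₂ x ∂ν₂| := le_abs_self _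
  have habs2 : ∫ x in B, g₂ x ∂ν₂ - ∫ x in B, g₂ x ∂ν₁ ≤ 2 * K * (tv ν₁ ν₂).toReal := by
    rw [← e1, ← e2]
    have := neg_abs_le (∫ x, G x ∂ν₁ - ∫ x, G x ∂ν₂)
    linarith [hcmp]
  linarith

/-! ### new material -/

lemma abs_sub_clamp_le {K a : ℝ} (hK : 0 ≤ K) : |a - clamp K a| ≤ |a| := by
  by_cases h : |a| ≤ K
  · rw [clamp_eq h, sub_self, abs_zero]; exact abs_nonneg _
  · push_neg at h
    rcases le_or_gt 0 a with ha | ha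
    · rw [abs_of_nonneg ha] at h ⊢
      have hc : clamp K a = K := by
        rw [clamp, min_eq_right h.le, max_eq_right (by linarith)]
      rw [hc, abs_of_nonneg (by linarith)]
      linarith
    · rw [abs_of_neg ha] at h ⊢
      have hc : clamp K a = -K := by
        rw [clamp, min_eq_left (by linarith), max_eq_left (by linarith)]
      rw [hc, sub_neg_eq_add, abs_of_nonpos (by linarith)]
      linarith

lemma tendsto_zero_of_forall_eventually {T : ℕ → ℝ} (h0 : ∀ n, 0 ≤ T n)
    (h : ∀ ε : ℝ, 0 < ε → ∀ᶠ n in atTop, T n ≤ ε) : Tendsto T atTop (𝓝 0) := by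
  rw [Metric.tendsto_atTop]
  intro ε hε
  obtain ⟨N, hN⟩ := eventually_atTop.mp (h (ε / 2) (by positivity))
  refine ⟨N, fun n hn => ?_⟩
  rw [Real.dist_eq, sub_zero, abs_of_nonneg (h0 n)]
  linarith [hN n hn]

lemma abs_setIntegral_le {ν : Measure S} {g : S → ℝ} (hgi : Integrable g ν) (A : Set S) :
    |∫ x in A, g x ∂ν| ≤ ∫ x, |g x| ∂ν := by
  have h1 : |∫ x in A, g x ∂ν| ≤ ∫ x in A, |g x| ∂ν := by
    simpa [Real.norm_eq_abs] using norm_integral_le_integral_norm (μ := ν.restrict A) g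
  exact h1.trans (setIntegral_le_integral hgi.abs (ae_of_all _ fun x => abs_nonneg _))

section main
variable {μs : ℕ → Measure S} {μ : Measure S} {fs : ℕ → S → ℝ} {f : S → ℝ}

/-- the quantity `sup_A |∫_A f_n dμ_n - ∫_A f dμ|` -/
noncomputable def Tn (μs : ℕ → Measure S) (μ : Measure S) (fs : ℕ → S → ℝ) (f : S → ℝ)
    (n : ℕ) : ℝ :=
  msSup (fun A => |∫ x in A, fs n x ∂(μs n) - ∫ x in A, f x ∂μ|)

lemma le_Tn (hfsi : Integrable (fs n) (μs n)) (hfi : Integrable f μ) {A : Set S}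
    (hA : MeasurableSet A) :
    |∫ x in A, fs n x ∂(μs n) - ∫ x in A, f x ∂μ| ≤ Tn μs μ fs f n := by
  show _ ≤ msSup (fun A => |∫ x in A, fs n x ∂(μs n) - ∫ x in A, f x ∂μ|)
  refine le_msSup (v := fun A => |∫ x in A, fs n x ∂(μs n) - ∫ x in A, f x ∂μ|)
    (M := (∫ x, |fs n x| ∂(μs n)) + ∫ x, |f x| ∂μ) (fun B hB => ?_) hA
  calc |∫ x in B, fs n x ∂(μs n) - ∫ x in B, f x ∂μ|
      ≤ |∫ x in B, fs n x ∂(μs n)| + |∫ x in B, f x ∂μ| := abs_sub _ _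
    _ ≤ (∫ x, |fs n x| ∂(μs n)) + ∫ x, |f x| ∂μ :=
        add_le_add (abs_setIntegral_le hfsi B) (abs_setIntegral_le hfi B)

lemma Tn_nonneg (hfsi : Integrable (fs n) (μs n)) (hfi : Integrable f μ) :
    0 ≤ Tn μs μ fs f n := by
  have := le_Tn (μs := μs) (μ := μ) (fs := fs) (f := f) hfsi hfi MeasurableSet.empty
  exact le_trans (abs_nonneg _) this

lemma back [∀ n, IsFiniteMeasure (μs n)] [IsFiniteMeasure μ]
    (hfm : ∀ n, Measurable (fs n)) (hfim : ∀ n, Integrable (fs n) (μs n))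
    (hfm0 : Measurable f) (hfi0 : Integrable f μ)
    (hD : Tendsto (fun n => tv (μs n) μ) atTop (𝓝 0))
    (h1 : ∀ ε : ℝ, 0 < ε → Tendsto (fun n => μ {s : S | ε ≤ |fs n s - f s|}) atTop (𝓝 0))
    (h2 : Tendsto (fun K : ℝ => ⨆ n, (μs n).withDensity (fun x => (‖fs n x‖₊ : ℝ≥0∞))
        {s : S | K ≤ |fs n s|}) atTop (𝓝 0)) :
    Tendsto (fun n => Tn μs μ fs f n) atTop (𝓝 0) := by
  refine tendsto_zero_of_forall_eventually (fun n => Tn_nonneg (hfim n) hfi0) ?_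
  intro ε hε
  set δ5 := ε / 5 with hδ5def
  have hδ5pos : 0 < δ5 := by positivity
  have ev2 : ∀ᶠ K : ℝ in atTop, (⨆ n, (μs n).withDensity (fun x => (‖fs n x‖₊ : ℝ≥0∞))
      {s : S | K ≤ |fs n s|}) ≤ ENNReal.ofReal δ5 :=
    (ENNReal.tendsto_nhds_zero.mp h2) _ (ENNReal.ofReal_pos.2 hδ5pos)
  have ev3 : ∀ᶠ K : ℝ in atTop,
      ∫⁻ x in {s : S | K ≤ |f s|}, (‖f x‖₊ : ℝ≥0∞) ∂μ ≤ ENNReal.ofReal δ5 :=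
    (ENNReal.tendsto_nhds_zero.mp (tendsto_tail_lintegral hfm0 hfi0.2.ne)) _
      (ENNReal.ofReal_pos.2 hδ5pos)
  obtain ⟨K, hKa, hK1⟩ := ((ev2.and ev3).and (eventually_ge_atTop (1 : ℝ))).exists
  obtain ⟨hKtail_n, hKtail_f⟩ := hKa
  have hK0 : (0:ℝ) ≤ K := le_trans zero_le_one hK1
  have hKpos : (0:ℝ) < K := lt_of_lt_of_le one_pos hK1
  set δ := δ5 / ((μ univ).toReal + 1) with hδdef
  have hδpos : 0 < δ := by
    apply div_pos hδ5pos
    positivity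
  have evn1 : ∀ᶠ n in atTop, μ {s : S | δ ≤ |fs n s - f s|} ≤ ENNReal.ofReal (δ5 / (2*K)) :=
    (ENNReal.tendsto_nhds_zero.mp (h1 δ hδpos)) _ (ENNReal.ofReal_pos.2 (by positivity))
  have evn2 : ∀ᶠ n in atTop, tv (μs n) μ ≤ ENNReal.ofReal (δ5 / (2*K)) :=
    (ENNReal.tendsto_nhds_zero.mp hD) _ (ENNReal.ofReal_pos.2 (by positivity))
  filter_upwards [evn1, evn2] with n hn1 hn2
  have htvne : tv (μs n) μ ≠ ⊤ := ne_top_of_le_ne_top ENNReal.ofReal_ne_top hn2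
  have htvle : (tv (μs n) μ).toReal ≤ δ5 / (2*K) := by
    have := ENNReal.toReal_mono ENNReal.ofReal_ne_top hn2
    rwa [ENNReal.toReal_ofReal (by positivity)] at this
  set Fn : S → ℝ := fun x => clamp K (fs n x) with hFndef
  set F : S → ℝ := fun x => clamp K (f x) with hFdef
  have hFnm : Measurable Fn := clamp_measurable (hfm n)
  have hFm : Measurable F := clamp_measurable hfm0
  have hFnb : ∀ x, |Fn x| ≤ K := fun x => abs_clamp_le hK0 _
  have hFb : ∀ x, |F x| ≤ K := fun x => abs_clamp_le hK0 _
  have hFni : Integrable Fn (μs n) := integrable_of_bdd hFnm.aestronglyMeasurable hFnb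
  have hFni' : Integrable Fn μ := integrable_of_bdd hFnm.aestronglyMeasurable hFnb
  have hFi : Integrable F μ := integrable_of_bdd hFm.aestronglyMeasurable hFb
  -- term 1
  have htail_meas : MeasurableSet {s : S | K ≤ |fs n s|} :=
    measurableSet_le measurable_const (hfm n).abs
  have ht1 : ∫ x, |fs n x - Fn x| ∂(μs n) ≤ δ5 := by
    have hsub : ∀ x, |fs n x - Fn x| ≤
        ({s : S | K ≤ |fs n s|}).indicator (fun x => |fs n x|) x := by
      intro x
      by_cases hx : x ∈ {s : S | K ≤ |fs n s|}
      · rw [Set.indicator_of_mem hx]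
        exact abs_sub_clamp_le hK0
      · rw [Set.indicator_of_notMem hx]
        simp only [Set.mem_setOf_eq, not_le] at hx
        simp only [hFndef]
        simp [clamp_eq hx.le]
    have hint : ∫ x, |fs n x - Fn x| ∂(μs n) ≤
        ∫ x, ({s : S | K ≤ |fs n s|}).indicator (fun x => |fs n x|) x ∂(μs n) := by
      refine integral_mono ((hfim n).sub hFni).abs ((hfim n).abs.indicator htail_meas) hsub
    rw [integral_indicator htail_meas] at hint
    have heq : ∫ x in {s : S | K ≤ |fs n s|}, |fs n x| ∂(μs n)
        = (∫⁻ x in {s : S | K ≤ |fs n s|}, (‖fs n x‖₊ : ℝ≥0∞) ∂(μs n)).toReal := by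
      simp only [← enorm_eq_nnnorm]
      rw [← integral_norm_eq_lintegral_enorm ((hfm n).aestronglyMeasurable.restrict)]
      simp [Real.norm_eq_abs]
    have hle : (∫⁻ x in {s : S | K ≤ |fs n s|}, (‖fs n x‖₊ : ℝ≥0∞) ∂(μs n)).toReal ≤ δ5 := by
      have h1 : ∫⁻ x in {s : S | K ≤ |fs n s|}, (‖fs n x‖₊ : ℝ≥0∞) ∂(μs n)
          ≤ ENNReal.ofReal δ5 := by
        refine le_trans ?_ hKtail_n
        rw [← withDensity_apply _ htail_meas]
        exact le_iSup (fun m => (μs m).withDensity (fun x => (‖fs m x‖₊ : ℝ≥0∞))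
          {s : S | K ≤ |fs m s|}) n
      have := ENNReal.toReal_mono ENNReal.ofReal_ne_top h1
      rwa [ENNReal.toReal_ofReal hδ5pos.le] at this
    calc ∫ x, |fs n x - Fn x| ∂(μs n) ≤ _ := hint
      _ ≤ δ5 := by rw [heq] at *; exact hle
  -- term 4
  have htailf_meas : MeasurableSet {s : S | K ≤ |f s|} :=
    measurableSet_le measurable_const hfm0.abs
  have ht4 : ∫ x, |F x - f x| ∂μ ≤ δ5 := by
    have hsub : ∀ x, |F x - f x| ≤ ({s : S | K ≤ |f s|}).indicator (fun x => |f x|) x := by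
      intro x
      by_cases hx : x ∈ {s : S | K ≤ |f s|}
      · rw [Set.indicator_of_mem hx, abs_sub_comm]
        exact abs_sub_clamp_le hK0
      · rw [Set.indicator_of_notMem hx]
        simp only [Set.mem_setOf_eq, not_le] at hx
        simp only [hFdef]
        simp [clamp_eq hx.le]
    have hint : ∫ x, |F x - f x| ∂μ ≤
        ∫ x, ({s : S | K ≤ |f s|}).indicator (fun x => |f x|) x ∂μ :=
      integral_mono (hFi.sub hfi0).abs (hfi0.abs.indicator htailf_meas) hsub
    rw [integral_indicator htailf_meas] at hint
    have heq : ∫ x in {s : S | K ≤ |f s|}, |f x| ∂μ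
        = (∫⁻ x in {s : S | K ≤ |f s|}, (‖f x‖₊ : ℝ≥0∞) ∂μ).toReal := by
      simp only [← enorm_eq_nnnorm]
      rw [← integral_norm_eq_lintegral_enorm (hfm0.aestronglyMeasurable.restrict)]
      simp [Real.norm_eq_abs]
    have hle : (∫⁻ x in {s : S | K ≤ |f s|}, (‖f x‖₊ : ℝ≥0∞) ∂μ).toReal ≤ δ5 := by
      have := ENNReal.toReal_mono ENNReal.ofReal_ne_top hKtail_f
      rwa [ENNReal.toReal_ofReal hδ5pos.le] at this
    calc ∫ x, |F x - f x| ∂μ ≤ _ := hint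
      _ ≤ δ5 := by rw [heq] at *; exact hle
  -- term 3
  have hEn_meas : MeasurableSet {s : S | δ ≤ |fs n s - f s|} :=
    measurableSet_le measurable_const ((hfm n).sub hfm0).abs
  have ht3 : ∫ x, |Fn x - F x| ∂μ ≤ 2 * δ5 := by
    set En := {s : S | δ ≤ |fs n s - f s|} with hEndef
    have hpt : ∀ x, |Fn x - F x| ≤ En.indicator (fun _ => 2*K) x + δ := by
      intro x
      by_cases hx : x ∈ En
      · rw [Set.indicator_of_mem hx]
        have := abs_sub (Fn x) (F x)
        have h1 := hFnb x; have h2 := hFb x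
        linarith
      · rw [Set.indicator_of_notMem hx]
        simp only [hEndef, Set.mem_setOf_eq, not_le] at hx
        have h := abs_clamp_sub_clamp_le (K := K) (a := fs n x) (b := f x)
        simp only [zero_add]
        exact le_trans h hx.le
    have hint : ∫ x, |Fn x - F x| ∂μ ≤
        ∫ x, (En.indicator (fun _ => 2*K) x + δ) ∂μ :=
      integral_mono (hFni'.sub hFi).abs
        (((integrable_const (2*K)).indicator hEn_meas).add (integrable_const δ)) hpt
    have hcalc : ∫ x, (En.indicator (fun _ => 2*K) x + δ) ∂μ
        = 2*K * (μ En).toReal + δ * (μ univ).toReal := by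
      rw [integral_add ((integrable_const (2*K)).indicator hEn_meas) (integrable_const δ),
        integral_indicator hEn_meas, setIntegral_const, integral_const, smul_eq_mul,
        smul_eq_mul]
      simp only [measureReal_def]
      ring
    have hbnd1 : (μ En).toReal ≤ δ5 / (2*K) := by
      have := ENNReal.toReal_mono ENNReal.ofReal_ne_top hn1
      rwa [ENNReal.toReal_ofReal (by positivity)] at this
    have hbnd2 : δ * (μ univ).toReal ≤ δ5 := by
      rw [hδdef, div_mul_eq_mul_div, div_le_iff₀ (by positivity)]
      have h0 : (0:ℝ) ≤ (μ univ).toReal := ENNReal.toReal_nonneg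
      nlinarith
    have hbnd1' : 2*K * (μ En).toReal ≤ δ5 := by
      have := mul_le_mul_of_nonneg_left hbnd1 (by positivity : (0:ℝ) ≤ 2*K)
      rwa [mul_div_cancel₀ _ (by positivity : (2*K) ≠ 0)] at this
    calc ∫ x, |Fn x - F x| ∂μ ≤ _ := hint
      _ = 2*K * (μ En).toReal + δ * (μ univ).toReal := hcalc
      _ ≤ δ5 + δ5 := add_le_add hbnd1' hbnd2
      _ = 2 * δ5 := by ring
  -- assemble
  refine msSup_le hε.le (fun A hA => ?_)
  set a1 := ∫ x in A, fs n x ∂(μs n)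
  set a2 := ∫ x in A, Fn x ∂(μs n)
  set a3 := ∫ x in A, Fn x ∂μ
  set a4 := ∫ x in A, F x ∂μ
  set a5 := ∫ x in A, f x ∂μ
  have e12 : |a1 - a2| ≤ δ5 := by
    have : a1 - a2 = ∫ x in A, (fs n x - Fn x) ∂(μs n) :=
      (integral_sub (hfim n).integrableOn hFni.integrableOn).symm
    rw [this]
    exact le_trans (abs_setIntegral_le ((hfim n).sub hFni) A) ht1
  have e23 : |a2 - a3| ≤ δ5 := by
    set G : S → ℝ := A.indicator Fn with hGdef
    have hGm : Measurable G := hFnm.indicator hA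
    have hGb : ∀ x, |G x| ≤ K := by
      intro x
      rw [hGdef]
      by_cases hx : x ∈ A
      · rw [Set.indicator_of_mem hx]; exact hFnb x
      · rw [Set.indicator_of_notMem hx]; simpa using hK0
    have := abs_integral_sub_le_tv (μs n) μ hGm hK0 hGb htvne
    rw [hGdef, integral_indicator hA, integral_indicator hA] at this
    calc |a2 - a3| ≤ 2 * K * (tv (μs n) μ).toReal := this
      _ ≤ 2 * K * (δ5 / (2*K)) := mul_le_mul_of_nonneg_left htvle (by positivity)
      _ = δ5 := by field_simp
  have e34 : |a3 - a4| ≤ 2 * δ5 := by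
    have : a3 - a4 = ∫ x in A, (Fn x - F x) ∂μ :=
      (integral_sub hFni'.integrableOn hFi.integrableOn).symm
    rw [this]
    exact le_trans (abs_setIntegral_le (hFni'.sub hFi) A) ht3
  have e45 : |a4 - a5| ≤ δ5 := by
    have : a4 - a5 = ∫ x in A, (F x - f x) ∂μ :=
      (integral_sub hFi.integrableOn hfi0.integrableOn).symm
    rw [this]
    exact le_trans (abs_setIntegral_le (hFi.sub hfi0) A) ht4
  have tri : |a1 - a5| ≤ |a1 - a2| + |a2 - a3| + |a3 - a4| + |a4 - a5| := by
    have h1 := abs_sub_le a1 a2 a5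
    have h2 := abs_sub_le a2 a3 a5
    have h3 := abs_sub_le a3 a4 a5
    linarith
  calc |a1 - a5| ≤ |a1 - a2| + |a2 - a3| + |a3 - a4| + |a4 - a5| := tri
    _ ≤ δ5 + δ5 + 2*δ5 + δ5 := by linarith
    _ = ε := by rw [hδ5def]; ring

lemma tendsto_tail_measure {ν : Measure S} [IsFiniteMeasure ν] {g : S → ℝ}
    (hg : Measurable g) :
    Tendsto (fun K : ℝ => ν {s : S | K ≤ |g s|}) atTop (𝓝 0) := by
  have hmeasset : ∀ K : ℝ, MeasurableSet {s : S | K ≤ |g s|} := fun K =>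
    measurableSet_le measurable_const hg.abs
  set Cs : ℕ → Set S := fun m => {s : S | (m : ℝ) ≤ |g s|} with hCs
  have hnat : Tendsto (fun m : ℕ => ν (Cs m)) atTop (𝓝 0) := by
    have h0 : ν (⋂ m : ℕ, Cs m) = 0 := by
      have he : (⋂ m : ℕ, Cs m) = ∅ := by
        ext x
        simp only [hCs, Set.mem_iInter, Set.mem_setOf_eq, Set.mem_empty_iff_false, iff_false,
          not_forall, not_le]
        obtain ⟨m, hm⟩ := exists_nat_gt |g x|
        exact ⟨m, hm⟩
      rw [he, measure_empty]
    have hanti : Antitone Cs := by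
      intro i j hij x hx
      simp only [hCs, Set.mem_setOf_eq] at hx ⊢
      exact le_trans ((Nat.cast_le (α := ℝ)).mpr hij) hx
    have := tendsto_measure_iInter_atTop (μ := ν) (s := Cs)
      (fun m => (hmeasset (m : ℝ)).nullMeasurableSet) hanti ⟨0, measure_ne_top _ _⟩
    rw [h0] at this
    exact this
  rw [ENNReal.tendsto_nhds_zero]
  intro ε hε
  obtain ⟨m, hm⟩ := (ENNReal.tendsto_atTop_zero.mp hnat) ε hε
  refine eventually_atTop.2 ⟨(m : ℝ), fun K hK => ?_⟩
  refine le_trans (measure_mono ?_) (hm m le_rfl)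
  intro x hx
  exact le_trans hK hx

lemma density_meas_le {ν₁ ν₂ : Measure S} [IsFiniteMeasure ν₁] [IsFiniteMeasure ν₂]
    {g₁ g₂ : S → ℝ} (hg₁m : Measurable g₁) (hg₁i : Integrable g₁ ν₁)
    (hg₂m : Measurable g₂) (hg₂i : Integrable g₂ ν₂) {t : ℝ}
    (hT : ∀ A : Set S, MeasurableSet A → |∫ x in A, g₁ x ∂ν₁ - ∫ x in A, g₂ x ∂ν₂| ≤ t)
    {B : Set S} (hB : MeasurableSet B) :
    ν₁.withDensity (fun x => (‖g₁ x‖₊ : ℝ≥0∞)) B ≤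
      ν₂.withDensity (fun x => (‖g₂ x‖₊ : ℝ≥0∞)) B + ENNReal.ofReal t + ENNReal.ofReal t := by
  set wd₁ := ν₁.withDensity (fun x => (‖g₁ x‖₊ : ℝ≥0∞)) with hwd₁
  set wd₂ := ν₂.withDensity (fun x => (‖g₂ x‖₊ : ℝ≥0∞)) with hwd₂
  have hpos_meas : MeasurableSet {x : S | 0 ≤ g₁ x} := measurableSet_le measurable_const hg₁m
  set P := B ∩ {x : S | 0 ≤ g₁ x} with hP
  set N := B ∩ {x : S | 0 ≤ g₁ x}ᶜ with hN
  have hPm : MeasurableSet P := hB.inter hpos_meas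
  have hNm : MeasurableSet N := hB.inter hpos_meas.compl
  have hPN : ∀ wd : Measure S, wd B = wd P + wd N := by
    intro wd
    rw [hP, hN, ← measure_union (Set.disjoint_of_subset Set.inter_subset_right
      Set.inter_subset_right disjoint_compl_right) hNm]
    congr 1
    rw [← Set.inter_union_distrib_left, Set.union_compl_self, Set.inter_univ]
  -- bounds for ∫ x in A, |g₂ x| ∂ν₂
  have habs2 : ∀ A : Set S, MeasurableSet A → ∫ x in A, |g₂ x| ∂ν₂ = (wd₂ A).toReal := by
    intro A hA
    rw [hwd₂, withDensity_apply _ hA]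
    simp only [← enorm_eq_nnnorm]
    rw [← integral_norm_eq_lintegral_enorm (hg₂m.aestronglyMeasurable.restrict)]
    simp [Real.norm_eq_abs]
  -- positive part
  have hPbound : wd₁ P ≤ wd₂ P + ENNReal.ofReal t := by
    have h1 : wd₁ P = ENNReal.ofReal (∫ x in P, g₁ x ∂ν₁) := by
      rw [hwd₁, withDensity_apply _ hPm,
        ofReal_integral_eq_lintegral_ofReal hg₁i.integrableOn
          ((ae_restrict_iff' hPm).2 (ae_of_all _ (fun x hx => hx.2)))]
      refine setLIntegral_congr_fun hPm (fun x hx => ?_)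
      rw [← enorm_eq_nnnorm, Real.enorm_eq_ofReal_abs, abs_of_nonneg hx.2]
    have h2 : ∫ x in P, g₁ x ∂ν₁ ≤ (wd₂ P).toReal + t := by
      have ha := hT P hPm
      have hb : ∫ x in P, g₂ x ∂ν₂ ≤ (wd₂ P).toReal := by
        rw [← habs2 P hPm]
        exact integral_mono hg₂i.integrableOn hg₂i.abs.integrableOn
          (fun x => le_abs_self _)
      have := abs_le.1 ha
      linarith [this.2]
    calc wd₁ P = ENNReal.ofReal (∫ x in P, g₁ x ∂ν₁) := h1
      _ ≤ ENNReal.ofReal ((wd₂ P).toReal + t) := ENNReal.ofReal_le_ofReal h2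
      _ ≤ ENNReal.ofReal ((wd₂ P).toReal) + ENNReal.ofReal t := ENNReal.ofReal_add_le
      _ ≤ wd₂ P + ENNReal.ofReal t := add_le_add_left ENNReal.ofReal_toReal_le _
  -- negative part
  have hNbound : wd₁ N ≤ wd₂ N + ENNReal.ofReal t := by
    have hg₁'i : Integrable (fun x => -g₁ x) ν₁ := hg₁i.neg
    have h1 : wd₁ N = ENNReal.ofReal (∫ x in N, (-(g₁ x)) ∂ν₁) := by
      have hnn : 0 ≤ᵐ[ν₁.restrict N] (fun x => -g₁ x) := by
        rw [EventuallyLE, ae_restrict_iff' hNm]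
        refine ae_of_all _ (fun x hx => ?_)
        have hneg : ¬ (0 ≤ g₁ x) := hx.2
        simp only [Pi.zero_apply]
        linarith [not_le.1 hneg]
      have e := ofReal_integral_eq_lintegral_ofReal (f := fun x => -g₁ x)
        hg₁'i.integrableOn hnn
      rw [hwd₁, withDensity_apply _ hNm]
      have e2 : ∫⁻ x in N, (‖g₁ x‖₊ : ℝ≥0∞) ∂ν₁ = ∫⁻ x in N, ENNReal.ofReal (-g₁ x) ∂ν₁ :=
        setLIntegral_congr_fun hNm (fun x hx => by
          have hlt : g₁ x < 0 := not_le.1 hx.2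
          rw [← enorm_eq_nnnorm, Real.enorm_eq_ofReal_abs, abs_of_neg hlt])
      rw [e2]
      exact e.symm
    have h2 : ∫ x in N, (-(g₁ x)) ∂ν₁ ≤ (wd₂ N).toReal + t := by
      have ha := hT N hNm
      have hb : -∫ x in N, g₂ x ∂ν₂ ≤ (wd₂ N).toReal := by
        rw [← habs2 N hNm]
        rw [← integral_neg]
        exact integral_mono hg₂i.neg.integrableOn hg₂i.abs.integrableOn
          (fun x => neg_le_abs _)
      have hc := abs_le.1 ha
      have : ∫ x in N, (-(g₁ x)) ∂ν₁ = -∫ x in N, g₁ x ∂ν₁ := integral_neg _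
      rw [this]
      linarith [hc.1]
    calc wd₁ N = ENNReal.ofReal (∫ x in N, (-(g₁ x)) ∂ν₁) := h1
      _ ≤ ENNReal.ofReal ((wd₂ N).toReal + t) := ENNReal.ofReal_le_ofReal h2
      _ ≤ ENNReal.ofReal ((wd₂ N).toReal) + ENNReal.ofReal t := ENNReal.ofReal_add_le
      _ ≤ wd₂ N + ENNReal.ofReal t := add_le_add_left ENNReal.ofReal_toReal_le _
  calc wd₁ B = wd₁ P + wd₁ N := hPN wd₁
    _ ≤ (wd₂ P + ENNReal.ofReal t) + (wd₂ N + ENNReal.ofReal t) := add_le_add hPbound hNbound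
    _ = (wd₂ P + wd₂ N) + ENNReal.ofReal t + ENNReal.ofReal t := by ring
    _ = wd₂ B + ENNReal.ofReal t + ENNReal.ofReal t := by rw [← hPN wd₂]

lemma exists_delta_of_lintegral {μ : Measure S} [IsFiniteMeasure μ] {f : S → ℝ}
    (hfm0 : Measurable f) (hfin : ∫⁻ x, (‖f x‖₊ : ℝ≥0∞) ∂μ ≠ ⊤) {r : ℝ} (hr : 0 < r) :
    ∃ δ : ℝ, 0 < δ ∧ ∀ B : Set S, MeasurableSet B → μ B ≤ ENNReal.ofReal δ →
      ∫⁻ x in B, (‖f x‖₊ : ℝ≥0∞) ∂μ ≤ ENNReal.ofReal r := by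
  have hev := (ENNReal.tendsto_nhds_zero.mp (tendsto_tail_lintegral hfm0 hfin)) _
    (ENNReal.ofReal_pos.2 (by positivity : (0:ℝ) < r/2))
  obtain ⟨K, hKtail, hK1⟩ := (hev.and (eventually_ge_atTop (1 : ℝ))).exists
  have hKpos : (0:ℝ) < K := lt_of_lt_of_le one_pos hK1
  refine ⟨r / (2*K), by positivity, fun B hB hμB => ?_⟩
  have hT_meas : MeasurableSet {s : S | K ≤ |f s|} := measurableSet_le measurable_const hfm0.abs
  have hsplit : B = (B ∩ {s : S | K ≤ |f s|}) ∪ (B ∩ {s : S | K ≤ |f s|}ᶜ) := by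
    rw [← Set.inter_union_distrib_left, Set.union_compl_self, Set.inter_univ]
  have h1 : ∫⁻ x in B ∩ {s : S | K ≤ |f s|}, (‖f x‖₊ : ℝ≥0∞) ∂μ ≤ ENNReal.ofReal (r/2) :=
    le_trans (lintegral_mono_set Set.inter_subset_right) hKtail
  have h2 : ∫⁻ x in B ∩ {s : S | K ≤ |f s|}ᶜ, (‖f x‖₊ : ℝ≥0∞) ∂μ ≤ ENNReal.ofReal (r/2) := by
    have hb : ∫⁻ x in B ∩ {s : S | K ≤ |f s|}ᶜ, (‖f x‖₊ : ℝ≥0∞) ∂μ ≤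
        ∫⁻ _ in B ∩ {s : S | K ≤ |f s|}ᶜ, ENNReal.ofReal K ∂μ := by
      refine setLIntegral_mono measurable_const (fun x hx => ?_)
      have : |f x| < K := not_le.1 hx.2
      rw [← enorm_eq_nnnorm, Real.enorm_eq_ofReal_abs]
      exact ENNReal.ofReal_le_ofReal this.le
    rw [setLIntegral_const] at hb
    have hμB' : μ (B ∩ {s : S | K ≤ |f s|}ᶜ) ≤ ENNReal.ofReal (r / (2*K)) :=
      le_trans (measure_mono Set.inter_subset_left) hμB
    calc ∫⁻ x in B ∩ {s : S | K ≤ |f s|}ᶜ, (‖f x‖₊ : ℝ≥0∞) ∂μ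
        ≤ ENNReal.ofReal K * μ (B ∩ {s : S | K ≤ |f s|}ᶜ) := hb
      _ ≤ ENNReal.ofReal K * ENNReal.ofReal (r / (2*K)) :=
          mul_le_mul_right hμB' _
      _ = ENNReal.ofReal (K * (r / (2*K))) := (ENNReal.ofReal_mul hKpos.le).symm
      _ = ENNReal.ofReal (r/2) := by
          congr 1
          field_simp
  calc ∫⁻ x in B, (‖f x‖₊ : ℝ≥0∞) ∂μ
      = ∫⁻ x in (B ∩ {s : S | K ≤ |f s|}) ∪ (B ∩ {s : S | K ≤ |f s|}ᶜ), (‖f x‖₊ : ℝ≥0∞) ∂μ := by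
        rw [← hsplit]
    _ = ∫⁻ x in B ∩ {s : S | K ≤ |f s|}, (‖f x‖₊ : ℝ≥0∞) ∂μ +
        ∫⁻ x in B ∩ {s : S | K ≤ |f s|}ᶜ, (‖f x‖₊ : ℝ≥0∞) ∂μ := by
        refine lintegral_union (hB.inter hT_meas.compl) ?_
        exact Set.disjoint_of_subset Set.inter_subset_right Set.inter_subset_right
          disjoint_compl_right
    _ ≤ ENNReal.ofReal (r/2) + ENNReal.ofReal (r/2) := add_le_add h1 h2
    _ = ENNReal.ofReal r := by
        rw [← ENNReal.ofReal_add (by positivity) (by positivity)]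
        congr 1
        ring

lemma fwd_meas [∀ n, IsFiniteMeasure (μs n)] [IsFiniteMeasure μ]
    (hfm : ∀ n, Measurable (fs n)) (hfim : ∀ n, Integrable (fs n) (μs n))
    (hfm0 : Measurable f) (hfi0 : Integrable f μ)
    (hD : Tendsto (fun n => tv (μs n) μ) atTop (𝓝 0))
    (hT : Tendsto (fun n => Tn μs μ fs f n) atTop (𝓝 0)) {ε : ℝ} (hε : 0 < ε) :
    Tendsto (fun n => μ {s : S | ε ≤ |fs n s - f s|}) atTop (𝓝 0) := by
  rw [ENNReal.tendsto_nhds_zero]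
  intro η hη
  set r := (min η 1).toReal with hrdef
  have hmin_ne_top : min η 1 ≠ ⊤ := ne_top_of_le_ne_top ENNReal.one_ne_top (min_le_right _ _)
  have hr : 0 < r := ENNReal.toReal_pos (lt_min hη zero_lt_one).ne' hmin_ne_top
  have hofr : ENNReal.ofReal r ≤ η := by
    rw [hrdef, ENNReal.ofReal_toReal hmin_ne_top]
    exact min_le_left _ _
  obtain ⟨K, htailf, hK1⟩ := (((ENNReal.tendsto_nhds_zero.mp (tendsto_tail_measure (ν := μ) hfm0)) _
      (ENNReal.ofReal_pos.2 (by positivity : (0:ℝ) < r/8))).and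
      (eventually_ge_atTop (1:ℝ))).exists
  have hK0 : (0:ℝ) ≤ K := le_trans zero_le_one hK1
  have hKpos : (0:ℝ) < K := lt_of_lt_of_le one_pos hK1
  have evT : ∀ᶠ n in atTop, Tn μs μ fs f n ≤ ε * r / 8 :=
    (hT.eventually_lt_const (by positivity)).mono (fun n h => h.le)
  have hminpos : (0:ℝ) < min (r/8) (ε*r/(16*K)) := lt_min (by positivity) (by positivity)
  have evD : ∀ᶠ n in atTop, tv (μs n) μ ≤ ENNReal.ofReal (min (r/8) (ε*r/(16*K))) :=
    (ENNReal.tendsto_nhds_zero.mp hD) _ (ENNReal.ofReal_pos.2 hminpos)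
  filter_upwards [evT, evD] with n hTn htv
  have htvne : tv (μs n) μ ≠ ⊤ := ne_top_of_le_ne_top ENNReal.ofReal_ne_top htv
  have htv8 : tv (μs n) μ ≤ ENNReal.ofReal (r/8) :=
    le_trans htv (ENNReal.ofReal_le_ofReal (min_le_left _ _))
  have htv16 : (tv (μs n) μ).toReal ≤ ε*r/(16*K) := by
    have h1 := ENNReal.toReal_mono ENNReal.ofReal_ne_top htv
    rw [ENNReal.toReal_ofReal hminpos.le] at h1
    exact le_trans h1 (min_le_right _ _)
  have h2K : 2 * K * (tv (μs n) μ).toReal ≤ ε * r / 8 := by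
    calc 2*K*(tv (μs n) μ).toReal ≤ 2*K*(ε*r/(16*K)) :=
          mul_le_mul_of_nonneg_left htv16 (by positivity)
      _ = ε*r/8 := by field_simp; ring
  have hfK_meas : MeasurableSet {s : S | |f s| ≤ K} := measurableSet_le hfm0.abs measurable_const
  -- the positive part
  set Bp := {s : S | ε ≤ fs n s - f s} ∩ {s : S | |f s| ≤ K} with hBpdef
  have hBpm : MeasurableSet Bp :=
    (measurableSet_le measurable_const ((hfm n).sub hfm0)).inter hfK_meas
  have hBpb : (μs n) Bp ≤ ENNReal.ofReal (r/4) := by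
    have haux := aux_lower (ν₁ := μs n) (ν₂ := μ) (hfim n) hfm0 hBpm hK0 hε
      (fun x hx => hx.2)
      (fun x hx => by
        have h : ε ≤ fs n x - f x := hx.1
        linarith) htvne
    have hTb : |∫ x in Bp, fs n x ∂(μs n) - ∫ x in Bp, f x ∂μ| ≤ Tn μs μ fs f n :=
      le_Tn (hfim n) hfi0 hBpm
    have hcb : ε * ((μs n) Bp).toReal ≤ ε * (r/4) := by
      calc ε * ((μs n) Bp).toReal
          ≤ |∫ x in Bp, fs n x ∂(μs n) - ∫ x in Bp, f x ∂μ| + 2*K*(tv (μs n) μ).toReal := haux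
        _ ≤ ε*r/8 + ε*r/8 := add_le_add (le_trans hTb hTn) h2K
        _ = ε * (r/4) := by ring
    have htR : ((μs n) Bp).toReal ≤ r/4 := le_of_mul_le_mul_left hcb hε
    exact (ENNReal.le_ofReal_iff_toReal_le (measure_ne_top _ _) (by positivity)).2 htR
  -- the negative part
  set Bm := {s : S | ε ≤ f s - fs n s} ∩ {s : S | |f s| ≤ K} with hBmdef
  have hBmm : MeasurableSet Bm :=
    (measurableSet_le measurable_const (hfm0.sub (hfm n))).inter hfK_meas
  have hBmb : (μs n) Bm ≤ ENNReal.ofReal (r/4) := by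
    have haux := aux_lower (ν₁ := μs n) (ν₂ := μ) (g₁ := fun x => -(fs n x))
      (g₂ := fun x => -(f x)) (hfim n).neg hfm0.neg hBmm hK0 hε
      (fun x hx => by rw [abs_neg]; exact hx.2)
      (fun x hx => by
        show -(f x) + ε ≤ -(fs n x)
        have h : ε ≤ f x - fs n x := hx.1
        linarith) htvne
    have hneg1 : ∫ x in Bm, -(fs n x) ∂(μs n) = -∫ x in Bm, fs n x ∂(μs n) := integral_neg _
    have hneg2 : ∫ x in Bm, -(f x) ∂μ = -∫ x in Bm, f x ∂μ := integral_neg _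
    rw [hneg1, hneg2] at haux
    have habs : |-∫ x in Bm, fs n x ∂(μs n) - -∫ x in Bm, f x ∂μ|
        = |∫ x in Bm, fs n x ∂(μs n) - ∫ x in Bm, f x ∂μ| := by
      rw [← abs_neg]
      congr 1
      ring
    rw [habs] at haux
    have hTb : |∫ x in Bm, fs n x ∂(μs n) - ∫ x in Bm, f x ∂μ| ≤ Tn μs μ fs f n :=
      le_Tn (hfim n) hfi0 hBmm
    have hcb : ε * ((μs n) Bm).toReal ≤ ε * (r/4) := by
      calc ε * ((μs n) Bm).toReal
          ≤ |∫ x in Bm, fs n x ∂(μs n) - ∫ x in Bm, f x ∂μ| + 2*K*(tv (μs n) μ).toReal := haux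
        _ ≤ ε*r/8 + ε*r/8 := add_le_add (le_trans hTb hTn) h2K
        _ = ε * (r/4) := by ring
    have htR : ((μs n) Bm).toReal ≤ r/4 := le_of_mul_le_mul_left hcb hε
    exact (ENNReal.le_ofReal_iff_toReal_le (measure_ne_top _ _) (by positivity)).2 htR
  -- measure transfer and assembly
  have hBp' : μ Bp ≤ ENNReal.ofReal (r/4) + ENNReal.ofReal (r/8) := by
    have := measure_le_add_tv (ν₁ := μ) (ν₂ := μs n) hBpm
    rw [tv_comm] at this
    exact le_trans this (add_le_add hBpb htv8)
  have hBm' : μ Bm ≤ ENNReal.ofReal (r/4) + ENNReal.ofReal (r/8) := by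
    have := measure_le_add_tv (ν₁ := μ) (ν₂ := μs n) hBmm
    rw [tv_comm] at this
    exact le_trans this (add_le_add hBmb htv8)
  have hsubset : {s : S | ε ≤ |fs n s - f s|} ⊆ (Bp ∪ Bm) ∪ {s : S | K ≤ |f s|} := by
    intro x hx
    simp only [Set.mem_setOf_eq] at hx
    rcases le_or_gt |f x| K with hf | hf
    · left
      rcases le_abs.1 hx with h | h
      · exact Or.inl ⟨h, hf⟩
      · exact Or.inr ⟨by simp only [Set.mem_setOf_eq]; linarith, hf⟩
    · right
      exact hf.le
  calc μ {s : S | ε ≤ |fs n s - f s|}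
      ≤ μ ((Bp ∪ Bm) ∪ {s : S | K ≤ |f s|}) := measure_mono hsubset
    _ ≤ μ (Bp ∪ Bm) + μ {s : S | K ≤ |f s|} := measure_union_le _ _
    _ ≤ (μ Bp + μ Bm) + μ {s : S | K ≤ |f s|} :=
        add_le_add_left (measure_union_le _ _) _
    _ ≤ ((ENNReal.ofReal (r/4) + ENNReal.ofReal (r/8)) +
        (ENNReal.ofReal (r/4) + ENNReal.ofReal (r/8))) + ENNReal.ofReal (r/8) :=
        add_le_add (add_le_add hBp' hBm') htailf
    _ ≤ η := by
        have h4 : (0:ℝ) ≤ r/4 := by positivity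
        have h8 : (0:ℝ) ≤ r/8 := by positivity
        have e1 : ENNReal.ofReal (r/4) + ENNReal.ofReal (r/8) = ENNReal.ofReal (r/4 + r/8) :=
          (ENNReal.ofReal_add h4 h8).symm
        rw [e1]
        have e2 : ENNReal.ofReal (r/4+r/8) + ENNReal.ofReal (r/4+r/8)
            = ENNReal.ofReal ((r/4+r/8) + (r/4+r/8)) :=
          (ENNReal.ofReal_add (by linarith) (by linarith)).symm
        rw [e2]
        have e3 : ENNReal.ofReal ((r/4+r/8) + (r/4+r/8)) + ENNReal.ofReal (r/8)
            = ENNReal.ofReal ((r/4+r/8) + (r/4+r/8) + r/8) :=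
          (ENNReal.ofReal_add (by linarith) h8).symm
        rw [e3]
        refine le_trans (ENNReal.ofReal_le_ofReal (by linarith)) hofr

lemma fwd_tail [∀ n, IsFiniteMeasure (μs n)] [IsFiniteMeasure μ]
    (hfm : ∀ n, Measurable (fs n)) (hfim : ∀ n, Integrable (fs n) (μs n))
    (hfm0 : Measurable f) (hfi0 : Integrable f μ)
    (hD : Tendsto (fun n => tv (μs n) μ) atTop (𝓝 0))
    (hT : Tendsto (fun n => Tn μs μ fs f n) atTop (𝓝 0)) :
    Tendsto (fun K : ℝ => ⨆ n, (μs n).withDensity (fun x => (‖fs n x‖₊ : ℝ≥0∞))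
      {s : S | K ≤ |fs n s|}) atTop (𝓝 0) := by
  rw [ENNReal.tendsto_nhds_zero]
  intro η hη
  set r := (min η 1).toReal with hrdef
  have hmin_ne_top : min η 1 ≠ ⊤ := ne_top_of_le_ne_top ENNReal.one_ne_top (min_le_right _ _)
  have hr : 0 < r := ENNReal.toReal_pos (lt_min hη zero_lt_one).ne' hmin_ne_top
  have hofr : ENNReal.ofReal r ≤ η := by
    rw [hrdef, ENNReal.ofReal_toReal hmin_ne_top]
    exact min_le_left _ _
  obtain ⟨δ, hδpos, hAC⟩ := exists_delta_of_lintegral hfm0 hfi0.2.ne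
    (by positivity : (0:ℝ) < r/2)
  have evT : ∀ᶠ n in atTop, Tn μs μ fs f n ≤ r/4 :=
    (hT.eventually_lt_const (by positivity)).mono (fun _ h => h.le)
  have evD : ∀ᶠ n in atTop, tv (μs n) μ ≤ ENNReal.ofReal (δ/2) :=
    (ENNReal.tendsto_nhds_zero.mp hD) _ (ENNReal.ofReal_pos.2 (by positivity))
  obtain ⟨N, hN⟩ := eventually_atTop.mp (evT.and evD)
  set ρ0 := μ.withDensity (fun x => (‖f x‖₊ : ℝ≥0∞)) with hρ0
  have hρ0fin : ρ0 univ ≠ ⊤ := by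
    rw [hρ0, withDensity_apply _ MeasurableSet.univ, setLIntegral_univ]
    exact hfi0.2.ne
  set C₀ := ρ0 univ + ENNReal.ofReal (r/2) with hC₀
  have hC₀ne : C₀ ≠ ⊤ := by
    rw [hC₀]
    exact ENNReal.add_ne_top.2 ⟨hρ0fin, ENNReal.ofReal_ne_top⟩
  have hTprop : ∀ n, ∀ A : Set S, MeasurableSet A →
      |∫ x in A, fs n x ∂(μs n) - ∫ x in A, f x ∂μ| ≤ Tn μs μ fs f n :=
    fun n A hA => le_Tn (hfim n) hfi0 hA
  have hwdle : ∀ n, N ≤ n → ∀ B : Set S, MeasurableSet B →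
      (μs n).withDensity (fun x => (‖fs n x‖₊ : ℝ≥0∞)) B ≤ ρ0 B + ENNReal.ofReal (r/2) := by
    intro n hn B hB
    have hd := density_meas_le (hfm n) (hfim n) hfm0 hfi0 (hTprop n) hB
    have hTn := (hN n hn).1
    calc (μs n).withDensity (fun x => (‖fs n x‖₊ : ℝ≥0∞)) B
        ≤ ρ0 B + ENNReal.ofReal (Tn μs μ fs f n) + ENNReal.ofReal (Tn μs μ fs f n) := hd
      _ ≤ ρ0 B + ENNReal.ofReal (r/4) + ENNReal.ofReal (r/4) :=
          add_le_add (add_le_add_right (ENNReal.ofReal_le_ofReal hTn) _)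
            (ENNReal.ofReal_le_ofReal hTn)
      _ = ρ0 B + ENNReal.ofReal (r/2) := by
          rw [add_assoc, ← ENNReal.ofReal_add (by positivity) (by positivity)]
          congr 1
          ring
  have hCn : ∀ n, N ≤ n →
      (μs n).withDensity (fun x => (‖fs n x‖₊ : ℝ≥0∞)) univ ≤ C₀ := by
    intro n hn
    rw [hC₀]
    exact hwdle n hn univ MeasurableSet.univ
  set K₂ := (2/δ) * C₀.toReal + 1 with hK₂def
  have evsmall : ∀ᶠ K : ℝ in atTop, ∀ m ∈ Finset.range N,
      (μs m).withDensity (fun x => (‖fs m x‖₊ : ℝ≥0∞)) {s : S | K ≤ |fs m s|} ≤ η := by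
    rw [eventually_all_finset]
    intro m _
    have ht : Tendsto (fun K : ℝ => (μs m).withDensity (fun x => (‖fs m x‖₊ : ℝ≥0∞))
        {s : S | K ≤ |fs m s|}) atTop (𝓝 0) := by
      refine (tendsto_tail_lintegral (hfm m) (hfim m).2.ne).congr (fun K => ?_)
      rw [withDensity_apply _ (measurableSet_le measurable_const (hfm m).abs)]
    exact (ENNReal.tendsto_nhds_zero.mp ht) η hη
  filter_upwards [evsmall, eventually_ge_atTop K₂, eventually_ge_atTop (1:ℝ)]
    with K hsmall hKK₂ hK1
  refine iSup_le (fun n => ?_)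
  rcases lt_or_ge n N with hn | hn
  · exact hsmall n (Finset.mem_range.2 hn)
  · have hKpos : (0:ℝ) < K := lt_of_lt_of_le one_pos hK1
    have htail_meas : MeasurableSet {s : S | K ≤ |fs n s|} :=
      measurableSet_le measurable_const (hfm n).abs
    have hset : {s : S | K ≤ |fs n s|} = {x : S | ENNReal.ofReal K ≤ (‖fs n x‖₊ : ℝ≥0∞)} := by
      ext x
      simp only [Set.mem_setOf_eq]
      rw [← enorm_eq_nnnorm, Real.enorm_eq_ofReal_abs]
      exact (ENNReal.ofReal_le_ofReal_iff (abs_nonneg _)).symm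
    have hcheb : ENNReal.ofReal K * (μs n) {s : S | K ≤ |fs n s|} ≤ C₀ := by
      rw [hset]
      refine le_trans (mul_meas_ge_le_lintegral₀ ((hfm n).nnnorm.coe_nnreal_ennreal).aemeasurable _) ?_
      have heq : ∫⁻ x, (‖fs n x‖₊ : ℝ≥0∞) ∂(μs n)
          = (μs n).withDensity (fun x => (‖fs n x‖₊ : ℝ≥0∞)) univ := by
        rw [withDensity_apply _ MeasurableSet.univ, setLIntegral_univ]
      rw [heq]
      exact hCn n hn
    have hKne : ENNReal.ofReal K ≠ 0 := (ENNReal.ofReal_pos.2 hKpos).ne'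
    have hμsn : (μs n) {s : S | K ≤ |fs n s|} ≤ ENNReal.ofReal (δ/2) := by
      have h1 : (μs n) {s : S | K ≤ |fs n s|} ≤ C₀ / ENNReal.ofReal K := by
        rw [ENNReal.le_div_iff_mul_le (Or.inl hKne) (Or.inl ENNReal.ofReal_ne_top), mul_comm]
        exact hcheb
      refine le_trans h1 ?_
      rw [ENNReal.div_le_iff_le_mul (Or.inl hKne) (Or.inl ENNReal.ofReal_ne_top)]
      calc C₀ = ENNReal.ofReal (C₀.toReal) := (ENNReal.ofReal_toReal hC₀ne).symm
        _ ≤ ENNReal.ofReal (δ/2 * K) := by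
            refine ENNReal.ofReal_le_ofReal ?_
            have hm : δ/2 * K₂ ≤ δ/2 * K := mul_le_mul_of_nonneg_left hKK₂ (by positivity)
            have h2 : δ/2 * K₂ = C₀.toReal + δ/2 := by
              rw [hK₂def]
              field_simp
            linarith
        _ = ENNReal.ofReal (δ/2) * ENNReal.ofReal K := ENNReal.ofReal_mul (by positivity)
    have hμ : μ {s : S | K ≤ |fs n s|} ≤ ENNReal.ofReal δ := by
      have hmt := measure_le_add_tv (ν₁ := μ) (ν₂ := μs n) htail_meas
      rw [tv_comm] at hmt
      refine le_trans hmt (le_trans (add_le_add hμsn (hN n hn).2) ?_)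
      rw [← ENNReal.ofReal_add (by positivity) (by positivity)]
      apply le_of_eq
      congr 1
      ring
    have hρ0tail : ρ0 {s : S | K ≤ |fs n s|} ≤ ENNReal.ofReal (r/2) := by
      rw [hρ0, withDensity_apply _ htail_meas]
      exact hAC _ htail_meas hμ
    calc (μs n).withDensity (fun x => (‖fs n x‖₊ : ℝ≥0∞)) {s : S | K ≤ |fs n s|}
        ≤ ρ0 {s : S | K ≤ |fs n s|} + ENNReal.ofReal (r/2) := hwdle n hn _ htail_meas
      _ ≤ ENNReal.ofReal (r/2) + ENNReal.ofReal (r/2) := add_le_add_left hρ0tail _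
      _ = ENNReal.ofReal r := by
          rw [← ENNReal.ofReal_add (by positivity) (by positivity)]
          congr 1
          ring
      _ ≤ η := hofr

end main
end UFS

open MeasureTheory Filter Topology

/-- Criterion for convergence in total variation of signed measures in terms of their
Radon–Nikodym derivatives. -/
theorem uniform_fatou_stmt16 {S : Type*} [MeasurableSpace S]
    (μs : ℕ → Measure S) (μ : Measure S) [∀ n, IsFiniteMeasure (μs n)]
    (htv : Tendsto (fun n => ⨆ (A : Set S) (_ : MeasurableSet A),
      (μs n A - μ A) + (μ A - μs n A)) atTop (𝓝 0))
    (τs : ℕ → SignedMeasure S) (τ : SignedMeasure S)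
    (hac : τ ≪ᵥ μ.toENNRealVectorMeasure)
    (hacs : ∀ n, τs n ≪ᵥ (μs n).toENNRealVectorMeasure) :
    Tendsto (fun n => ⨆ (A : Set S) (_ : MeasurableSet A), |τs n A - τ A|)
        atTop (𝓝 0) ↔
    ((∀ ε : ℝ, 0 < ε →
        Tendsto (fun n =>
          μ {s | ε ≤ |(τs n).rnDeriv (μs n) s - τ.rnDeriv μ s|}) atTop (𝓝 0)) ∧
      Tendsto (fun K : ℝ => ⨆ n,
          (τs n).totalVariation {s | K ≤ |(τs n).rnDeriv (μs n) s|})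
        atTop (𝓝 0)) := by
  classical
  have htv' : Tendsto (fun n => UFS.tv (μs n) μ) atTop (𝓝 0) := htv
  haveI hμfin : IsFiniteMeasure μ := by
    obtain ⟨n, hn⟩ := ((ENNReal.tendsto_nhds_zero.mp htv') 1 zero_lt_one).exists
    constructor
    have h := UFS.measure_le_add_tv (ν₁ := μ) (ν₂ := μs n) MeasurableSet.univ
    rw [UFS.tv_comm] at h
    calc μ Set.univ ≤ μs n Set.univ + UFS.tv (μs n) μ := h
      _ ≤ μs n Set.univ + 1 := add_le_add_right hn _
      _ < ⊤ := ENNReal.add_lt_top.2 ⟨measure_lt_top _ _, ENNReal.one_lt_top⟩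
  have hfm : ∀ n, Measurable ((τs n).rnDeriv (μs n)) := fun n =>
    SignedMeasure.measurable_rnDeriv _ _
  have hfim : ∀ n, Integrable ((τs n).rnDeriv (μs n)) (μs n) := fun n =>
    SignedMeasure.integrable_rnDeriv _ _
  have hfm0 : Measurable (τ.rnDeriv μ) := SignedMeasure.measurable_rnDeriv _ _
  have hfi0 : Integrable (τ.rnDeriv μ) μ := SignedMeasure.integrable_rnDeriv _ _
  have hreps : ∀ n, (μs n).withDensityᵥ ((τs n).rnDeriv (μs n)) = τs n := fun n =>
    SignedMeasure.withDensityᵥ_rnDeriv_eq _ _ (hacs n)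
  have hrep : μ.withDensityᵥ (τ.rnDeriv μ) = τ :=
    SignedMeasure.withDensityᵥ_rnDeriv_eq _ _ hac
  have happs : ∀ n, ∀ A : Set S, MeasurableSet A →
      τs n A = ∫ x in A, (τs n).rnDeriv (μs n) x ∂(μs n) := by
    intro n A hA
    have h := withDensityᵥ_apply (hfim n) hA
    rw [hreps n] at h
    exact h
  have happ : ∀ A : Set S, MeasurableSet A → τ A = ∫ x in A, τ.rnDeriv μ x ∂μ := by
    intro A hA
    have h := withDensityᵥ_apply hfi0 hA
    rw [hrep] at h
    exact h
  have htv_tot : ∀ n, (τs n).totalVariation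
      = (μs n).withDensity (fun x => (‖(τs n).rnDeriv (μs n) x‖₊ : ℝ≥0∞)) := by
    intro n
    have h := UFS.totalVariation_withDensityᵥ (hfm n) (hfim n)
    rw [hreps n] at h
    exact h
  have hLHS : (fun n => ⨆ (A : Set S) (_ : MeasurableSet A), |τs n A - τ A|)
      = fun n => UFS.Tn μs μ (fun n => (τs n).rnDeriv (μs n)) (τ.rnDeriv μ) n := by
    funext n
    unfold UFS.Tn UFS.msSup
    congr 1
    funext A
    by_cases hA : MeasurableSet A
    · rw [ciSup_pos (f := fun _ : MeasurableSet A => |τs n A - τ A|) hA,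
        ciSup_pos (f := fun _ : MeasurableSet A =>
          |∫ x in A, (τs n).rnDeriv (μs n) x ∂(μs n) - ∫ x in A, τ.rnDeriv μ x ∂μ|) hA,
        happs n A hA, happ A hA]
    · haveI : IsEmpty (MeasurableSet A) := ⟨hA⟩
      rw [Real.iSup_of_isEmpty, Real.iSup_of_isEmpty]
  have hRHS2 : (fun K : ℝ => ⨆ n, (τs n).totalVariation
        {s | K ≤ |(τs n).rnDeriv (μs n) s|})
      = fun K : ℝ => ⨆ n, (μs n).withDensity
        (fun x => (‖(τs n).rnDeriv (μs n) x‖₊ : ℝ≥0∞)) {s | K ≤ |(τs n).rnDeriv (μs n) s|} := by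
    funext K
    congr 1
    funext n
    rw [htv_tot n]
  rw [hLHS, hRHS2]
  constructor
  · intro hT
    exact ⟨fun ε hε => UFS.fwd_meas hfm hfim hfm0 hfi0 htv' hT hε,
      UFS.fwd_tail hfm hfim hfm0 hfi0 htv' hT⟩
  · rintro ⟨h1, h2⟩
    exact UFS.back hfm hfim hfm0 hfi0 htv' h1 h2
end
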